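/- arXiv:1910.06162 — 8 statements merged into one kernel-verified Lean document; each statement's English description precedes it below -/
import Mathlib

section
/- A finite poset is series-parallel (i.e., generated from the singleton poset by finitely many serial and parallel compositions) if and only if it does not contain an induced subposet isomorphic to N, the four-element poset {a,b,c,d} with a<b, c<b, c<d and no other strict relations. -/
/-- A bundled finite poset. -/
structure FPoset where
  carrier : Type
  [str : PartialOrder carrier]
  [fin : Fintype carrier]

attribute [instance] FPoset.str FPoset.fin

/-- `IsSer P Q R`: `R` is (a realization of) the serial composition `P ; Q`,
the disjoint union of `P` and `Q` with every point of `P` below every point of `Q`. -/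
def IsSer (P Q R : FPoset) : Prop :=
  ∃ (ip : P.carrier → R.carrier) (iq : Q.carrier → R.carrier),
    Function.Injective ip ∧ Function.Injective iq ∧
    (∀ (x : P.carrier) (y : Q.carrier), ip x ≠ iq y) ∧
    (∀ r : R.carrier, (∃ x, r = ip x) ∨ (∃ y, r = iq y)) ∧
    (∀ u v : R.carrier, u ≤ v ↔
      ((∃ x y : P.carrier, u = ip x ∧ v = ip y ∧ x ≤ y) ∨
       (∃ x y : Q.carrier, u = iq x ∧ v = iq y ∧ x ≤ y) ∨
       (∃ (x : P.carrier) (y : Q.carrier), u = ip x ∧ v = iq y)))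

/-- `IsPar P Q R`: `R` is (a realization of) the parallel composition `P ⊗ Q`,
the disjoint union of `P` and `Q` with no relations across. -/
def IsPar (P Q R : FPoset) : Prop :=
  ∃ (ip : P.carrier → R.carrier) (iq : Q.carrier → R.carrier),
    Function.Injective ip ∧ Function.Injective iq ∧
    (∀ (x : P.carrier) (y : Q.carrier), ip x ≠ iq y) ∧
    (∀ r : R.carrier, (∃ x, r = ip x) ∨ (∃ y, r = iq y)) ∧
    (∀ u v : R.carrier, u ≤ v ↔
      ((∃ x y : P.carrier, u = ip x ∧ v = ip y ∧ x ≤ y) ∨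
       (∃ x y : Q.carrier, u = iq x ∧ v = iq y ∧ x ≤ y)))

/-- Series-parallel posets: generated from the empty and singleton posets by
finitely many serial and parallel compositions (up to isomorphism, which is
built into the specifications `IsSer`, `IsPar`). -/
inductive SP : FPoset → Prop
  | empty {P : FPoset} : IsEmpty P.carrier → SP P
  | single {P : FPoset} : (∃ x : P.carrier, ∀ y : P.carrier, y = x) → SP P
  | ser {P Q R : FPoset} : SP P → SP Q → IsSer P Q R → SP R
  | par {P Q R : FPoset} : SP P → SP Q → IsPar P Q R → SP R

/-- `P` contains an induced subposet isomorphic to N: four elements `a,b,c,d`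
with `a<b`, `c<b`, `c<d` and no other strict relations. -/
def HasN (P : FPoset) : Prop :=
  ∃ a b c d : P.carrier,
    a < b ∧ c < b ∧ c < d ∧
    ¬ a ≤ c ∧ ¬ c ≤ a ∧ ¬ a ≤ d ∧ ¬ d ≤ a ∧ ¬ b ≤ d ∧ ¬ d ≤ b



namespace SPAux

variable {α : Type}

/-- Adjacency of `g` restricted to `s`, with distinctness built in. -/
def Adj (g : α → α → Prop) (s : Finset α) (x y : α) : Prop :=
  x ∈ s ∧ y ∈ s ∧ x ≠ y ∧ g x y

/-- Connectivity within `s`. -/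
def Conn (g : α → α → Prop) (s : Finset α) (x y : α) : Prop :=
  Relation.ReflTransGen (Adj g s) x y

def P4Free (g : α → α → Prop) (s : Finset α) : Prop :=
  ¬ ∃ w x y z : α, w ∈ s ∧ x ∈ s ∧ y ∈ s ∧ z ∈ s ∧
    w ≠ x ∧ w ≠ y ∧ w ≠ z ∧ x ≠ y ∧ x ≠ z ∧ y ≠ z ∧
    g w x ∧ g x y ∧ g y z ∧ ¬ g w y ∧ ¬ g w z ∧ ¬ g x z

def Disconn (g : α → α → Prop) (s : Finset α) : Prop :=
  ∃ x ∈ s, ∃ y ∈ s, ¬ Conn g s x y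

lemma adj_symm {g : α → α → Prop} (hg : Symmetric g) {s : Finset α} :
    Symmetric (Adj g s) := fun _ _ h => ⟨h.2.1, h.1, h.2.2.1.symm, hg h.2.2.2⟩

lemma conn_symm {g : α → α → Prop} (hg : Symmetric g) {s : Finset α} :
    Symmetric (Conn g s) :=
  have : Std.Symm (Adj g s) := ⟨adj_symm hg⟩
  fun x y h => (Relation.ReflTransGen.stdSymm (r := Adj g s)).symm x y h

lemma conn_trans {g : α → α → Prop} {s : Finset α} {x y z : α}
    (h1 : Conn g s x y) (h2 : Conn g s y z) : Conn g s x z := h1.trans h2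

lemma conn_mem_right {g : α → α → Prop} {s : Finset α} {x y : α}
    (h : Conn g s x y) : x = y ∨ y ∈ s := by
  induction h with
  | refl => exact Or.inl rfl
  | tail _ h2 _ => exact Or.inr h2.2.1

lemma no_step_conn {g : α → α → Prop} {s : Finset α} {x y : α}
    (h : ∀ b, ¬ Adj g s x b) (hc : Conn g s x y) : x = y := by
  rcases (Relation.ReflTransGen.cases_head hc) with rfl | ⟨b, hb, _⟩
  · rfl
  · exact absurd hb (h b)

lemma conn_mono_rel {g g' : α → α → Prop} (himp : ∀ a b, g a b → g' a b) {s : Finset α}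
    {x y : α} (hc : Conn g s x y) : Conn g' s x y := by
  induction hc with
  | refl => exact Relation.ReflTransGen.refl
  | tail _ h2 ih => exact ih.tail ⟨h2.1, h2.2.1, h2.2.2.1, himp _ _ h2.2.2.2⟩

lemma p4free_mono {g : α → α → Prop} {s t : Finset α} (hts : t ⊆ s)
    (h : P4Free g s) : P4Free g t := by
  rintro ⟨w, x, y, z, hw, hx, hy, hz, rest⟩
  exact h ⟨w, x, y, z, hts hw, hts hx, hts hy, hts hz, rest⟩

lemma p4free_compl {g : α → α → Prop} (hg : Symmetric g) {s : Finset α} (h : P4Free g s) :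
    P4Free (fun a b => ¬ g a b) s := by
  rintro ⟨w, x, y, z, hw, hx, hy, hz, hwx, hwy, hwz, hxy, hxz, hyz,
    ewx, exy, eyz, nwy, nwz, nxz⟩
  exact h ⟨y, w, z, x, hy, hw, hz, hx, hwy.symm, hyz, hxy.symm, hwz, hwx, hxz.symm,
    hg (not_not.mp nwy), not_not.mp nwz, hg (not_not.mp nxz),
    eyz, fun h' => exy (hg h'), ewx⟩

/-- Splitting off a component: a disconnected restriction yields a partition
with no edges across. -/
lemma partition_of_disconn [DecidableEq α] {g : α → α → Prop} (hg : Symmetric g)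
    {s : Finset α} (h : Disconn g s) :
    ∃ A B : Finset α, A ∪ B = s ∧ Disjoint A B ∧ A.Nonempty ∧ B.Nonempty ∧
      (∀ a ∈ A, ∀ b ∈ B, ¬ g a b) ∧
      (∃ x ∈ A, (∀ a ∈ A, Conn g s x a) ∧ (∀ p, Conn g s x p → p ∈ A)) := by
  classical
  obtain ⟨x, hx, y, hy, hxy⟩ := h
  refine ⟨s.filter (fun u => Conn g s x u), s.filter (fun u => ¬ Conn g s x u), ?_, ?_, ?_, ?_, ?_, ?_⟩
  · rw [Finset.filter_union_filter_not_eq]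
  · exact Finset.disjoint_filter_filter_not s s _
  · exact ⟨x, Finset.mem_filter.mpr ⟨hx, Relation.ReflTransGen.refl⟩⟩
  · exact ⟨y, Finset.mem_filter.mpr ⟨hy, hxy⟩⟩
  · intro a ha b hb hab
    rw [Finset.mem_filter] at ha hb
    by_cases hab' : a = b
    · exact hb.2 (hab' ▸ ha.2)
    · exact hb.2 (ha.2.tail ⟨ha.1, hb.1, hab', hab⟩)
  · refine ⟨x, Finset.mem_filter.mpr ⟨hx, Relation.ReflTransGen.refl⟩,
      fun a ha => (Finset.mem_filter.mp ha).2, fun p hp => ?_⟩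
    rcases conn_mem_right hp with rfl | hps
    · exact Finset.mem_filter.mpr ⟨hx, Relation.ReflTransGen.refl⟩
    · exact Finset.mem_filter.mpr ⟨hps, hp⟩

/-- Core step of Seinsche's theorem. -/
lemma seinsche_step [DecidableEq α] {g : α → α → Prop} (hg : Symmetric g)
    {s : Finset α} (hp4 : P4Free g s) {v : α} (hv : v ∈ s)
    (hd : Disconn g (s.erase v)) :
    Disconn g s ∨ Disconn (fun a b => ¬ g a b) s := by
  classical
  set s' := s.erase v with hs'
  obtain ⟨x, hx, y, hy, hxy⟩ := hd
  by_cases hw : ∃ w ∈ s', ∀ u ∈ s', Conn g s' w u → ¬ g v u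
  · -- v sees no vertex of w's component: g is disconnected on s
    obtain ⟨w, hws, hwno⟩ := hw
    left
    refine ⟨w, Finset.mem_of_mem_erase hws, v, hv, fun hconn => ?_⟩
    -- any g-path in s from w stays in s'
    have key : ∀ u, Conn g s w u → Conn g s' w u := by
      intro u hu
      induction hu with
      | refl => exact Relation.ReflTransGen.refl
      | @tail p u hwp hpu ih =>
        have hps' : p ∈ s' := by
          rcases conn_mem_right ih with rfl | h
          · exact hws
          · exact h
        have hus' : u ∈ s' := by
          rcases eq_or_ne u v with rfl | hne
          · exact absurd (hg hpu.2.2.2) (hwno p hps' ih)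
          · exact Finset.mem_erase.mpr ⟨hne, hpu.2.1⟩
        exact ih.tail ⟨hps', hus', hpu.2.2.1, hpu.2.2.2⟩
    have := key v hconn
    rcases conn_mem_right this with rfl | h
    · exact (Finset.mem_erase.mp hws).1 rfl
    · exact (Finset.mem_erase.mp h).1 rfl
  · -- every component of s' contains a neighbour of v; then v is adjacent to all of s'
    push_neg at hw
    have claim : ∀ u ∈ s', g v u := by
      by_contra hcl
      push_neg at hcl
      obtain ⟨u, hu, hgu⟩ := hcl
      obtain ⟨a, ha, hconn_ua, hgva⟩ := hw u hu
      -- find a flip edge p-q with ¬ g v p, g v q along the path from u to a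
      have flip : ∀ b, Conn g s' u b → g v b →
          ∃ p q, Adj g s' p q ∧ Conn g s' u p ∧ ¬ g v p ∧ g v q := by
        intro b hb
        induction hb with
        | refl => intro h; exact absurd h hgu
        | @tail p b hup hpb ih =>
          intro hgvb
          by_cases hvp : g v p
          · exact ih hvp
          · exact ⟨p, b, hpb, hup, hvp, hgvb⟩
      obtain ⟨p, q, hpq, hup, hnvp, hgvq⟩ := flip a hconn_ua hgva
      -- u is disconnected from one of x,y in s'
      have hz : ∃ z ∈ s', ¬ Conn g s' u z := by
        by_contra hz
        push_neg at hz
        exact hxy ((conn_symm hg (hz x hx)).trans (hz y hy))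
      obtain ⟨z, hzs, hzconn⟩ := hz
      obtain ⟨d, hd, hconn_zd, hgvd⟩ := hw z hzs
      have hconn_uq : Conn g s' u q := hup.tail hpq
      have hconn_ud : ¬ Conn g s' u d := fun h =>
        hzconn (h.trans (conn_symm hg hconn_zd))
      have hps : p ∈ s' := hpq.1
      have hqs : q ∈ s' := hpq.2.1
      -- distinctness and nonadjacency facts
      have hpd : p ≠ d := fun h => hconn_ud (h ▸ hup)
      have hqd : q ≠ d := fun h => hconn_ud (h ▸ hconn_uq)
      have hgpd : ¬ g p d := fun h => hconn_ud (hup.tail ⟨hps, hd, hpd, h⟩)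
      have hgqd : ¬ g q d := fun h => hconn_ud (hconn_uq.tail ⟨hqs, hd, hqd, h⟩)
      have hpv : p ≠ v := (Finset.mem_erase.mp hps).1
      have hqv : q ≠ v := (Finset.mem_erase.mp hqs).1
      have hdv : d ≠ v := (Finset.mem_erase.mp hd).1
      exact hp4 ⟨p, q, v, d, Finset.mem_of_mem_erase hps, Finset.mem_of_mem_erase hqs,
        hv, Finset.mem_of_mem_erase hd, hpq.2.2.1, hpv, hpd, hqv, hqd, hdv.symm,
        hpq.2.2.2, hg hgvq, hgvd, fun h => hnvp (hg h), hgpd, hgqd⟩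
    -- v adjacent to all of s': complement disconnected
    right
    refine ⟨v, hv, x, Finset.mem_of_mem_erase hx, fun hconn => ?_⟩
    have : v = x := by
      refine no_step_conn (fun b hb => ?_) hconn
      obtain ⟨_, hbs, hne, hnb⟩ := hb
      exact hnb (claim b (Finset.mem_erase.mpr ⟨fun h => hne h.symm, hbs⟩))
    exact (Finset.mem_erase.mp hx).1 this.symm

/-- Seinsche's theorem, partition-free form. -/
lemma seinsche [DecidableEq α] :
    ∀ (n : ℕ) (g : α → α → Prop), Symmetric g → ∀ s : Finset α, s.card ≤ n →
      P4Free g s → 2 ≤ s.card →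
      Disconn g s ∨ Disconn (fun a b => ¬ g a b) s := by
  intro n
  induction n with
  | zero => intro g _ s hs _ h2; omega
  | succ n ih =>
    intro g hg s hs hp4 h2
    rcases eq_or_lt_of_le h2 with h2' | h3
    · -- card = 2
      obtain ⟨x, y, hxy, hset⟩ := Finset.card_eq_two.mp h2'.symm
      have hx : x ∈ s := by rw [hset]; simp
      have hy : y ∈ s := by rw [hset]; simp
      by_cases hgxy : g x y
      · right
        refine ⟨x, hx, y, hy, fun hconn => hxy (no_step_conn (fun b hb => ?_) hconn)⟩
        obtain ⟨_, hbs, hne, hnb⟩ := hb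
        rw [hset, Finset.mem_insert, Finset.mem_singleton] at hbs
        rcases hbs with rfl | rfl
        · exact hne rfl
        · exact hnb hgxy
      · left
        refine ⟨x, hx, y, hy, fun hconn => hxy (no_step_conn (fun b hb => ?_) hconn)⟩
        obtain ⟨_, hbs, hne, hnb⟩ := hb
        rw [hset, Finset.mem_insert, Finset.mem_singleton] at hbs
        rcases hbs with rfl | rfl
        · exact hne rfl
        · exact hgxy hnb
    · -- card ≥ 3
      obtain ⟨v, hv⟩ : s.Nonempty := Finset.card_pos.mp (by omega)
      have hcard : (s.erase v).card = s.card - 1 := Finset.card_erase_of_mem hv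
      have h2' : 2 ≤ (s.erase v).card := by omega
      have hsub : s.erase v ⊆ s := Finset.erase_subset v s
      rcases ih g hg (s.erase v) (by omega) (p4free_mono hsub hp4) h2' with hdis | hdis
      · exact seinsche_step hg hp4 hv hdis
      · rcases seinsche_step (fun a b h => fun h' => h (hg h'))
          (p4free_compl hg hp4) hv hdis with h | h
        · exact Or.inr h
        · left
          obtain ⟨a, ha, b, hb, hc⟩ := h
          exact ⟨a, ha, b, hb, fun h' =>
            hc (conn_mono_rel (fun a b hab => not_not.mpr hab) h')⟩

end SPAux

namespace SPAux

/-- The induced subposet of `P` on a finset `A`. -/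
def sub (P : FPoset) (A : Finset P.carrier) : FPoset := FPoset.mk ↥A

lemma hasN_sub {P : FPoset} {A : Finset P.carrier} (h : HasN (sub P A)) : HasN P := by
  obtain ⟨a, b, c, d, h1, h2, h3, h4, h5, h6, h7, h8, h9⟩ := h
  exact ⟨a.1, b.1, c.1, d.1, Subtype.coe_lt_coe.mpr h1, Subtype.coe_lt_coe.mpr h2,
    Subtype.coe_lt_coe.mpr h3,
    fun h => h4 (Subtype.coe_le_coe.mp h), fun h => h5 (Subtype.coe_le_coe.mp h),
    fun h => h6 (Subtype.coe_le_coe.mp h), fun h => h7 (Subtype.coe_le_coe.mp h),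
    fun h => h8 (Subtype.coe_le_coe.mp h), fun h => h9 (Subtype.coe_le_coe.mp h)⟩

lemma card_sub (P : FPoset) (A : Finset P.carrier) :
    Fintype.card (sub P A).carrier = A.card := Fintype.card_coe A

lemma card_sub_lt {P : FPoset} [DecidableEq P.carrier] {A B : Finset P.carrier}
    (hU : A ∪ B = Finset.univ) (hd : Disjoint A B) (hB : B.Nonempty) :
    Fintype.card (sub P A).carrier < Fintype.card P.carrier := by
  rw [card_sub, ← Finset.card_univ, ← hU, Finset.card_union_of_disjoint hd]
  have := Finset.card_pos.mpr hB
  omega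

lemma isPar_of_partition (P : FPoset) [DecidableEq P.carrier] (A B : Finset P.carrier)
    (hU : A ∪ B = Finset.univ)
    (hAB : ∀ a ∈ A, ∀ b ∈ B, ¬ a ≤ b ∧ ¬ b ≤ a) :
    IsPar (sub P A) (sub P B) P := by
  refine ⟨Subtype.val, Subtype.val, Subtype.val_injective, Subtype.val_injective,
    ?_, ?_, ?_⟩
  · rintro x y h
    exact (hAB x.1 x.2 y.1 y.2).1 (h ▸ le_refl x.1)
  · intro r
    have hr : r ∈ A ∪ B := hU ▸ Finset.mem_univ r
    rcases Finset.mem_union.mp hr with h | h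
    · exact Or.inl ⟨⟨r, h⟩, rfl⟩
    · exact Or.inr ⟨⟨r, h⟩, rfl⟩
  · intro u v
    constructor
    · intro huv
      have hu : u ∈ A ∪ B := hU ▸ Finset.mem_univ u
      have hv : v ∈ A ∪ B := hU ▸ Finset.mem_univ v
      rcases Finset.mem_union.mp hu with hu | hu <;>
        rcases Finset.mem_union.mp hv with hv | hv
      · exact Or.inl ⟨⟨u, hu⟩, ⟨v, hv⟩, rfl, rfl, huv⟩
      · exact absurd huv (hAB u hu v hv).1
      · exact absurd huv (hAB v hv u hu).2
      · exact Or.inr ⟨⟨u, hu⟩, ⟨v, hv⟩, rfl, rfl, huv⟩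
    · rintro (⟨x, y, rfl, rfl, h⟩ | ⟨x, y, rfl, rfl, h⟩) <;>
        exact Subtype.coe_le_coe.mpr h

lemma isSer_of_partition (P : FPoset) [DecidableEq P.carrier] (A B : Finset P.carrier)
    (hU : A ∪ B = Finset.univ)
    (hAB : ∀ a ∈ A, ∀ b ∈ B, a < b) :
    IsSer (sub P A) (sub P B) P := by
  refine ⟨Subtype.val, Subtype.val, Subtype.val_injective, Subtype.val_injective,
    ?_, ?_, ?_⟩
  · rintro x y h
    exact absurd (h ▸ hAB x.1 x.2 y.1 y.2) (lt_irrefl x.1)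
  · intro r
    have hr : r ∈ A ∪ B := hU ▸ Finset.mem_univ r
    rcases Finset.mem_union.mp hr with h | h
    · exact Or.inl ⟨⟨r, h⟩, rfl⟩
    · exact Or.inr ⟨⟨r, h⟩, rfl⟩
  · intro u v
    constructor
    · intro huv
      have hu : u ∈ A ∪ B := hU ▸ Finset.mem_univ u
      have hv : v ∈ A ∪ B := hU ▸ Finset.mem_univ v
      rcases Finset.mem_union.mp hu with hu | hu <;>
        rcases Finset.mem_union.mp hv with hv | hv
      · exact Or.inl ⟨⟨u, hu⟩, ⟨v, hv⟩, rfl, rfl, huv⟩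
      · exact Or.inr (Or.inr ⟨⟨u, hu⟩, ⟨v, hv⟩, rfl, rfl⟩)
      · exact absurd ((hAB v hv u hu).trans_le huv) (lt_irrefl v)
      · exact Or.inr (Or.inl ⟨⟨u, hu⟩, ⟨v, hv⟩, rfl, rfl, huv⟩)
    · rintro (⟨x, y, rfl, rfl, h⟩ | ⟨x, y, rfl, rfl, h⟩ | ⟨x, y, rfl, rfl⟩)
      · exact Subtype.coe_le_coe.mpr h
      · exact Subtype.coe_le_coe.mpr h
      · exact (hAB x.1 x.2 y.1 y.2).le

/-- `N`-freeness gives `P4`-freeness of the comparability relation. -/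
lemma p4free_of_nfree (P : FPoset) (hn : ¬ HasN P) :
    P4Free (fun x y : P.carrier => x ≤ y ∨ y ≤ x) (Finset.univ : Finset P.carrier) := by
  rintro ⟨w, x, y, z, -, -, -, -, hwx, hwy, hwz, hxy, hxz, hyz,
    ewx, exy, eyz, nwy, nwz, nxz⟩
  obtain ⟨nwy1, nwy2⟩ := not_or.mp nwy
  obtain ⟨nwz1, nwz2⟩ := not_or.mp nwz
  obtain ⟨nxz1, nxz2⟩ := not_or.mp nxz
  rcases ewx with h | h
  · have hwltx : w < x := lt_of_le_of_ne h hwx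
    have hyx : y < x := by
      rcases exy with h' | h'
      · exact absurd (h.trans h') nwy1
      · exact lt_of_le_of_ne h' hxy.symm
    have hyz' : y < z := by
      rcases eyz with h' | h'
      · exact lt_of_le_of_ne h' hyz
      · exact absurd (h'.trans hyx.le) nxz2
    exact hn ⟨w, x, y, z, hwltx, hyx, hyz', nwy1, nwy2, nwz1, nwz2, nxz1, nxz2⟩
  · have hxltw : x < w := lt_of_le_of_ne h hwx.symm
    have hxy' : x < y := by
      rcases exy with h' | h'
      · exact lt_of_le_of_ne h' hxy
      · exact absurd (h'.trans h) nwy2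
    have hzy : z < y := by
      rcases eyz with h' | h'
      · exact absurd (hxy'.le.trans h') nxz1
      · exact lt_of_le_of_ne h' hyz.symm
    exact hn ⟨z, y, x, w, hzy, hxy', hxltw, nxz2, nxz1, nwz2, nwz1, nwy2, nwy1⟩

end SPAux

namespace SPAux

lemma sp_of_nfree : ∀ (n : ℕ) (P : FPoset), Fintype.card P.carrier ≤ n → ¬ HasN P → SP P := by
  intro n
  induction n with
  | zero =>
    intro P h _
    exact SP.empty (Fintype.card_eq_zero_iff.mp (Nat.le_zero.mp h))
  | succ n ih =>
    intro P hcard hn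
    classical
    rcases lt_or_ge (Fintype.card P.carrier) 2 with hsmall | h2
    · have h01 : Fintype.card P.carrier = 0 ∨ Fintype.card P.carrier = 1 := by omega
      rcases h01 with h | h
      · exact SP.empty (Fintype.card_eq_zero_iff.mp h)
      · exact SP.single (Fintype.card_eq_one_iff.mp h)
    · set c := fun x y : P.carrier => (x ≤ y ∨ y ≤ x) with hc
      have hcsymm : Symmetric c := fun a b h => h.symm
      have hp4 := p4free_of_nfree P hn
      have h2' : 2 ≤ (Finset.univ : Finset P.carrier).card := by
        rw [Finset.card_univ]; exact h2
      have hNsub : ∀ A : Finset P.carrier, ¬ HasN (sub P A) :=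
        fun A h => hn (hasN_sub h)
      rcases seinsche (Finset.univ : Finset P.carrier).card c hcsymm Finset.univ
          le_rfl hp4 h2' with hdis | hdis
      · -- parallel decomposition
        obtain ⟨A, B, hU, hd, hA, hB, hcross, -⟩ := partition_of_disconn hcsymm hdis
        have hU' : B ∪ A = Finset.univ := by rw [Finset.union_comm]; exact hU
        have cA : Fintype.card (sub P A).carrier < Fintype.card P.carrier :=
          card_sub_lt hU hd hB
        have cB : Fintype.card (sub P B).carrier < Fintype.card P.carrier :=
          card_sub_lt hU' hd.symm hA
        refine SP.par (ih _ (by omega) (hNsub A)) (ih _ (by omega) (hNsub B))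
          (isPar_of_partition P A B hU ?_)
        intro a ha b hb
        exact ⟨fun h => hcross a ha b hb (Or.inl h), fun h => hcross a ha b hb (Or.inr h)⟩
      · -- serial decomposition
        have hisymm : Symmetric (fun a b => ¬ c a b) := fun a b h h' => h (hcsymm h')
        obtain ⟨A, B, hU, hd, hA, hB, hcross, x0, hx0A, hx0conn, hx0comp⟩ :=
          partition_of_disconn hisymm hdis
        have hcomp : ∀ a ∈ A, ∀ b ∈ B, a ≤ b ∨ b ≤ a :=
          fun a ha b hb => not_not.mp (hcross a ha b hb)
        have hne : ∀ a ∈ A, ∀ b ∈ B, a ≠ b := by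
          intro a ha b hb h
          exact Finset.disjoint_left.mp hd ha (h ▸ hb)
        have hx0B : x0 ∉ B := Finset.disjoint_left.mp hd hx0A
        have up : ∀ b ∈ B, x0 ≤ b →
            ∀ q, Conn (fun a b => ¬ c a b) Finset.univ x0 q → q < b := by
          intro b hb hx0b q hq
          induction hq with
          | refl => exact lt_of_le_of_ne hx0b (hne x0 hx0A b hb)
          | @tail p q hxp hpq ihq =>
            have hqA : q ∈ A := hx0comp q (hxp.tail hpq)
            rcases hcomp q hqA b hb with h | h
            · exact lt_of_le_of_ne h (hne q hqA b hb)
            · exact absurd (Or.inl (ihq.le.trans h)) hpq.2.2.2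
        have down : ∀ b ∈ B, b ≤ x0 →
            ∀ q, Conn (fun a b => ¬ c a b) Finset.univ x0 q → b < q := by
          intro b hb hbx0 q hq
          induction hq with
          | refl => exact lt_of_le_of_ne hbx0 (fun h => hne x0 hx0A b hb h.symm)
          | @tail p q hxp hpq ihq =>
            have hqA : q ∈ A := hx0comp q (hxp.tail hpq)
            rcases hcomp q hqA b hb with h | h
            · exact absurd (Or.inr (h.trans ihq.le)) hpq.2.2.2
            · exact lt_of_le_of_ne h (fun h' => hne q hqA b hb h'.symm)
        set Bp := B.filter (fun b => x0 ≤ b) with hBp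
        set Bm := B.filter (fun b => b ≤ x0) with hBm
        have hBpB : Bp ⊆ B := Finset.filter_subset _ _
        have hBmB : Bm ⊆ B := Finset.filter_subset _ _
        have hBsplit : ∀ b ∈ B, b ∈ Bp ∨ b ∈ Bm := by
          intro b hb
          rcases hcomp x0 hx0A b hb with h | h
          · exact Or.inl (Finset.mem_filter.mpr ⟨hb, h⟩)
          · exact Or.inr (Finset.mem_filter.mpr ⟨hb, h⟩)
        rcases Finset.eq_empty_or_nonempty Bp with hBpe | hBpne
        · -- all of B is below A : B ; A
          have hBA : ∀ b ∈ B, ∀ a ∈ A, b < a := by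
            intro b hb a ha
            have hbm : b ∈ Bm := by
              rcases hBsplit b hb with h | h
              · rw [hBpe] at h; exact absurd h (Finset.notMem_empty b)
              · exact h
            exact down b hb (Finset.mem_filter.mp hbm).2 a (hx0conn a ha)
          have hU' : B ∪ A = Finset.univ := by rw [Finset.union_comm]; exact hU
          have cA : Fintype.card (sub P A).carrier < Fintype.card P.carrier :=
            card_sub_lt hU hd hB
          have cB : Fintype.card (sub P B).carrier < Fintype.card P.carrier :=
            card_sub_lt hU' hd.symm hA
          exact SP.ser (ih _ (by omega) (hNsub B)) (ih _ (by omega) (hNsub A))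
            (isSer_of_partition P B A hU' hBA)
        · -- (A ∪ Bm) ; Bp
          have hx0Bp : ∀ u ∈ Bp, x0 < u := by
            intro u hu
            obtain ⟨huB, hup⟩ := Finset.mem_filter.mp hu
            exact lt_of_le_of_ne hup (hne x0 hx0A u huB)
          have hBmBp : Disjoint Bm Bp := by
            rw [Finset.disjoint_left]
            intro b h1 h2
            obtain ⟨hbB, hb1⟩ := Finset.mem_filter.mp h1
            obtain ⟨_, hb2⟩ := Finset.mem_filter.mp h2
            exact hx0B (le_antisymm hb1 hb2 ▸ hbB)
          have hdisj2 : Disjoint (A ∪ Bm) Bp :=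
            Finset.disjoint_union_left.mpr ⟨hd.mono_right hBpB, hBmBp⟩
          have hU2 : (A ∪ Bm) ∪ Bp = Finset.univ := by
            have hBsum : Bm ∪ Bp = B := by
              apply Finset.Subset.antisymm
              · exact Finset.union_subset hBmB hBpB
              · intro b hb
                rcases hBsplit b hb with h | h
                · exact Finset.mem_union.mpr (Or.inr h)
                · exact Finset.mem_union.mpr (Or.inl h)
            rw [Finset.union_assoc, hBsum]; exact hU
          have hlt : ∀ l ∈ A ∪ Bm, ∀ u ∈ Bp, l < u := by
            intro l hl u hu
            obtain ⟨huB, hux⟩ := Finset.mem_filter.mp hu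
            rcases Finset.mem_union.mp hl with h | h
            · exact up u huB hux l (hx0conn l h)
            · exact lt_of_le_of_lt (Finset.mem_filter.mp h).2 (hx0Bp u hu)
          have hU2' : Bp ∪ (A ∪ Bm) = Finset.univ := by
            rw [Finset.union_comm]; exact hU2
          have cL : Fintype.card (sub P (A ∪ Bm)).carrier < Fintype.card P.carrier :=
            card_sub_lt hU2 hdisj2 hBpne
          have cU : Fintype.card (sub P Bp).carrier < Fintype.card P.carrier :=
            card_sub_lt hU2' hdisj2.symm ⟨x0, Finset.mem_union.mpr (Or.inl hx0A)⟩
          exact SP.ser (ih _ (by omega) (hNsub (A ∪ Bm))) (ih _ (by omega) (hNsub Bp))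
            (isSer_of_partition P (A ∪ Bm) Bp hU2 hlt)

lemma nfree_of_sp {P : FPoset} (h : SP P) : ¬ HasN P := by
  induction h with
  | empty hP =>
    rintro ⟨a, -⟩
    exact hP.elim a
  | single hP =>
    rintro ⟨a, b, c, d, h1, -⟩
    obtain ⟨x, hx⟩ := hP
    rw [hx a, hx b] at h1
    exact lt_irrefl x h1
  | @ser Q R S hQ hR hser ihQ ihR =>
    rintro ⟨a, b, c, d, hab, hcb, hcd, nac, nca, nad, nda, nbd, ndb⟩
    obtain ⟨ip, iq, hip, hiq, hdisj, hcover, horder⟩ := hser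
    have cross : ∀ x y, ip x ≤ iq y := fun x y =>
      (horder _ _).mpr (Or.inr (Or.inr ⟨x, y, rfl, rfl⟩))
    have side : ∀ u w : S.carrier, ¬ u ≤ w → ¬ w ≤ u →
        ((∃ x, u = ip x) ∧ (∃ x, w = ip x)) ∨
        ((∃ y, u = iq y) ∧ (∃ y, w = iq y)) := by
      intro u w h1 h2
      rcases hcover u with ⟨x, rfl⟩ | ⟨y, rfl⟩ <;>
        rcases hcover w with ⟨x', rfl⟩ | ⟨y', rfl⟩
      · exact Or.inl ⟨⟨x, rfl⟩, ⟨x', rfl⟩⟩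
      · exact absurd (cross x y') h1
      · exact absurd (cross x' y) h2
      · exact Or.inr ⟨⟨y, rfl⟩, ⟨y', rfl⟩⟩
    have lep : ∀ x y, ip x ≤ ip y ↔ x ≤ y := by
      intro x y
      constructor
      · intro h
        rcases (horder _ _).mp h with ⟨x', y', hx, hy, hle⟩ | ⟨x', y', hx, hy, hle⟩ |
          ⟨x', y', hx, hy⟩
        · rwa [hip hx, hip hy]
        · exact absurd hx (hdisj x x')
        · exact absurd hy (hdisj y y')
      · intro h
        exact (horder _ _).mpr (Or.inl ⟨x, y, rfl, rfl, h⟩)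
    have leq : ∀ x y, iq x ≤ iq y ↔ x ≤ y := by
      intro x y
      constructor
      · intro h
        rcases (horder _ _).mp h with ⟨x', y', hx, hy, hle⟩ | ⟨x', y', hx, hy, hle⟩ |
          ⟨x', y', hx, hy⟩
        · exact absurd hx.symm (hdisj x' x)
        · rwa [hiq hx, hiq hy]
        · exact absurd hx.symm (hdisj x' x)
      · intro h
        exact (horder _ _).mpr (Or.inr (Or.inl ⟨x, y, rfl, rfl, h⟩))
    rcases side a c nac nca with ⟨⟨xa, rfl⟩, ⟨xc, rfl⟩⟩ | ⟨⟨ya, rfl⟩, ⟨yc, rfl⟩⟩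
    · -- all four in Q (the P-side of the serial composition)
      obtain ⟨xd, rfl⟩ : ∃ x, d = ip x := by
        rcases side _ _ nad nda with ⟨-, h⟩ | ⟨⟨ya, hya⟩, -⟩
        · exact h
        · exact absurd hya (hdisj xa ya)
      obtain ⟨xb, rfl⟩ : ∃ x, b = ip x := by
        rcases side _ _ nbd ndb with ⟨h, -⟩ | ⟨-, ⟨yd, hyd⟩⟩
        · exact h
        · exact absurd hyd (hdisj xd yd)
      refine ihQ ⟨xa, xb, xc, xd, ?_, ?_, ?_, ?_, ?_, ?_, ?_, ?_, ?_⟩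
      · exact lt_of_le_of_ne ((lep _ _).mp hab.le) (fun h => hab.ne (by rw [h]))
      · exact lt_of_le_of_ne ((lep _ _).mp hcb.le) (fun h => hcb.ne (by rw [h]))
      · exact lt_of_le_of_ne ((lep _ _).mp hcd.le) (fun h => hcd.ne (by rw [h]))
      · exact fun h => nac ((lep _ _).mpr h)
      · exact fun h => nca ((lep _ _).mpr h)
      · exact fun h => nad ((lep _ _).mpr h)
      · exact fun h => nda ((lep _ _).mpr h)
      · exact fun h => nbd ((lep _ _).mpr h)
      · exact fun h => ndb ((lep _ _).mpr h)
    · obtain ⟨yd, rfl⟩ : ∃ y, d = iq y := by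
        rcases side _ _ nad nda with ⟨⟨xa, hxa⟩, -⟩ | ⟨-, h⟩
        · exact absurd hxa.symm (hdisj xa ya)
        · exact h
      obtain ⟨yb, rfl⟩ : ∃ y, b = iq y := by
        rcases side _ _ nbd ndb with ⟨-, ⟨xd, hxd⟩⟩ | ⟨h, -⟩
        · exact absurd hxd.symm (hdisj xd yd)
        · exact h
      refine ihR ⟨ya, yb, yc, yd, ?_, ?_, ?_, ?_, ?_, ?_, ?_, ?_, ?_⟩
      · exact lt_of_le_of_ne ((leq _ _).mp hab.le) (fun h => hab.ne (by rw [h]))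
      · exact lt_of_le_of_ne ((leq _ _).mp hcb.le) (fun h => hcb.ne (by rw [h]))
      · exact lt_of_le_of_ne ((leq _ _).mp hcd.le) (fun h => hcd.ne (by rw [h]))
      · exact fun h => nac ((leq _ _).mpr h)
      · exact fun h => nca ((leq _ _).mpr h)
      · exact fun h => nad ((leq _ _).mpr h)
      · exact fun h => nda ((leq _ _).mpr h)
      · exact fun h => nbd ((leq _ _).mpr h)
      · exact fun h => ndb ((leq _ _).mpr h)
  | @par Q R S hQ hR hpar ihQ ihR =>
    rintro ⟨a, b, c, d, hab, hcb, hcd, nac, nca, nad, nda, nbd, ndb⟩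
    obtain ⟨ip, iq, hip, hiq, hdisj, hcover, horder⟩ := hpar
    have side : ∀ u w : S.carrier, u ≤ w →
        ((∃ x, u = ip x) ∧ (∃ x, w = ip x)) ∨
        ((∃ y, u = iq y) ∧ (∃ y, w = iq y)) := by
      intro u w h
      rcases (horder _ _).mp h with ⟨x, y, hx, hy, -⟩ | ⟨x, y, hx, hy, -⟩
      · exact Or.inl ⟨⟨x, hx⟩, ⟨y, hy⟩⟩
      · exact Or.inr ⟨⟨x, hx⟩, ⟨y, hy⟩⟩
    have lep : ∀ x y, ip x ≤ ip y ↔ x ≤ y := by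
      intro x y
      constructor
      · intro h
        rcases (horder _ _).mp h with ⟨x', y', hx, hy, hle⟩ | ⟨x', y', hx, hy, hle⟩
        · rwa [hip hx, hip hy]
        · exact absurd hx (hdisj x x')
      · intro h
        exact (horder _ _).mpr (Or.inl ⟨x, y, rfl, rfl, h⟩)
    have leq : ∀ x y, iq x ≤ iq y ↔ x ≤ y := by
      intro x y
      constructor
      · intro h
        rcases (horder _ _).mp h with ⟨x', y', hx, hy, hle⟩ | ⟨x', y', hx, hy, hle⟩
        · exact absurd hx.symm (hdisj x' x)
        · rwa [hiq hx, hiq hy]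
      · intro h
        exact (horder _ _).mpr (Or.inr ⟨x, y, rfl, rfl, h⟩)
    rcases side a b hab.le with ⟨⟨xa, rfl⟩, ⟨xb, rfl⟩⟩ | ⟨⟨ya, rfl⟩, ⟨yb, rfl⟩⟩
    · obtain ⟨xc, rfl⟩ : ∃ x, c = ip x := by
        rcases side c _ hcb.le with ⟨h, -⟩ | ⟨-, ⟨yb', hyb⟩⟩
        · exact h
        · exact absurd hyb (hdisj xb yb')
      obtain ⟨xd, rfl⟩ : ∃ x, d = ip x := by
        rcases side _ _ hcd.le with ⟨-, h⟩ | ⟨⟨yc, hyc⟩, -⟩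
        · exact h
        · exact absurd hyc (hdisj xc yc)
      refine ihQ ⟨xa, xb, xc, xd, ?_, ?_, ?_, ?_, ?_, ?_, ?_, ?_, ?_⟩
      · exact lt_of_le_of_ne ((lep _ _).mp hab.le) (fun h => hab.ne (by rw [h]))
      · exact lt_of_le_of_ne ((lep _ _).mp hcb.le) (fun h => hcb.ne (by rw [h]))
      · exact lt_of_le_of_ne ((lep _ _).mp hcd.le) (fun h => hcd.ne (by rw [h]))
      · exact fun h => nac ((lep _ _).mpr h)
      · exact fun h => nca ((lep _ _).mpr h)
      · exact fun h => nad ((lep _ _).mpr h)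
      · exact fun h => nda ((lep _ _).mpr h)
      · exact fun h => nbd ((lep _ _).mpr h)
      · exact fun h => ndb ((lep _ _).mpr h)
    · obtain ⟨yc, rfl⟩ : ∃ y, c = iq y := by
        rcases side c _ hcb.le with ⟨-, ⟨xb, hxb⟩⟩ | ⟨h, -⟩
        · exact absurd hxb.symm (hdisj xb yb)
        · exact h
      obtain ⟨yd, rfl⟩ : ∃ y, d = iq y := by
        rcases side _ _ hcd.le with ⟨⟨xc, hxc⟩, -⟩ | ⟨-, h⟩
        · exact absurd hxc.symm (hdisj xc yc)
        · exact h
      refine ihR ⟨ya, yb, yc, yd, ?_, ?_, ?_, ?_, ?_, ?_, ?_, ?_, ?_⟩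
      · exact lt_of_le_of_ne ((leq _ _).mp hab.le) (fun h => hab.ne (by rw [h]))
      · exact lt_of_le_of_ne ((leq _ _).mp hcb.le) (fun h => hcb.ne (by rw [h]))
      · exact lt_of_le_of_ne ((leq _ _).mp hcd.le) (fun h => hcd.ne (by rw [h]))
      · exact fun h => nac ((leq _ _).mpr h)
      · exact fun h => nca ((leq _ _).mpr h)
      · exact fun h => nad ((leq _ _).mpr h)
      · exact fun h => nda ((leq _ _).mpr h)
      · exact fun h => nbd ((leq _ _).mpr h)
      · exact fun h => ndb ((leq _ _).mpr h)

end SPAux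

/-- A finite poset is series-parallel iff it contains no induced N. -/
theorem seriesParallel_iff_N_free (P : FPoset) : SP P ↔ ¬ HasN P := by
  constructor
  · exact SPAux.nfree_of_sp
  · exact fun hn => SPAux.sp_of_nfree (Fintype.card P.carrier) P le_rfl hn
end

section
/- A finite poset P is an interval order if and only if it has an interval representation: functions b,e : P → Q into some linear order (Q, <_Q) such that b(x) <_Q e(x) for all x, and x <_P y ⟺ e(x) <_Q b(y) for all x,y ∈ P. -/
/-- Fishburn's theorem: a finite poset is an interval order iff it has an
interval representation, i.e. functions `b e : P → Q` into some linear order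
`Q` with `b x < e x` for all `x` and `x < y ↔ e x < b y` for all `x, y`. -/
theorem intervalOrder_iff_intervalRepresentation
    (P : Type) [Fintype P] [PartialOrder P] :
    (∀ w x y z : P, w < y → x < z → w < z ∨ x < y) ↔
      ∃ (Q : Type) (_ : LinearOrder Q) (b e : P → Q),
        (∀ x : P, b x < e x) ∧ (∀ x y : P, x < y ↔ e x < b y) := by
  classical
  constructor
  · intro h
    -- l x = number of strict predecessors of x
    set l : P → ℕ := fun x => (Finset.univ.filter (fun w => w < x)).card with hl
    -- r x = max of l over elements not strictly above x
    set r : P → ℕ := fun x => (Finset.univ.filter (fun z => ¬ x < z)).sup l with hr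
    have hxmem : ∀ x : P, x ∈ Finset.univ.filter (fun z => ¬ x < z) := by
      intro x; simp [lt_irrefl]
    have hlr : ∀ x : P, l x ≤ r x := fun x => Finset.le_sup (hxmem x)
    -- key: if x < y and ¬ x < z then l z < l y
    have key : ∀ x y z : P, x < y → ¬ x < z → l z < l y := by
      intro x y z hxy hxz
      apply Finset.card_lt_card
      constructor
      · intro w hw
        simp only [Finset.mem_filter, Finset.mem_univ, true_and] at hw ⊢
        rcases h w x z y hw hxy with h1 | h1
        · exact h1
        · exact absurd h1 hxz
      · intro hsub
        have := hsub (by simp [hxy] : x ∈ Finset.univ.filter (fun w => w < y))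
        simp only [Finset.mem_filter, Finset.mem_univ, true_and] at this
        exact hxz this
    refine ⟨ℕ, inferInstance, fun x => 2 * l x, fun x => 2 * r x + 1, ?_, ?_⟩
    · intro x
      have := hlr x
      simp only []
      omega
    · intro x y
      constructor
      · intro hxy
        have hly : 0 < l y := by
          have : x ∈ Finset.univ.filter (fun w => w < y) := by simp [hxy]
          have := Finset.card_pos.mpr ⟨x, this⟩
          simpa [hl] using this
        have : r x < l y := by
          rw [hr]
          rw [Finset.sup_lt_iff (by simpa using hly)]
          intro z hz
          simp only [Finset.mem_filter, Finset.mem_univ, true_and] at hz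
          exact key x y z hxy hz
        show 2 * r x + 1 < 2 * l y
        omega
      · intro hlt
        have hlt' : 2 * r x + 1 < 2 * l y := hlt
        by_contra hxy
        have : l y ≤ r x := Finset.le_sup (by simp [hxy])
        omega
  · rintro ⟨Q, _, b, e, hbe, hrep⟩
    intro w x y z hwy hxz
    rw [hrep] at hwy hxz ⊢
    rw [hrep]
    rcases lt_or_ge (e w) (b z) with h1 | h1
    · exact Or.inl h1
    · exact Or.inr (lt_of_lt_of_le hxz (le_trans h1 hwy.le))
end

section
/- The class of finite interval orders is closed under gluing composition of iposets: if P : n → m and Q : m → k are iposets whose underlying posets are interval orders, then the underlying poset of P * Q is an interval order. -/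
/-- A poset with interfaces (iposet): a finite poset with injective monotone
source and target maps from discrete posets `Fin n`, `Fin m` whose images
consist of minimal, resp. maximal, elements. -/
structure Iposet where
  n : ℕ
  m : ℕ
  carrier : Type
  [str : PartialOrder carrier]
  [fin : Fintype carrier]
  s : Fin n → carrier
  t : Fin m → carrier
  s_inj : Function.Injective s
  t_inj : Function.Injective t
  s_min : ∀ (i : Fin n) (x : carrier), ¬ x < s i
  t_max : ∀ (i : Fin m) (x : carrier), ¬ t i < x

attribute [instance] Iposet.str Iposet.fin

namespace Iposet

/-- The empty iposet `id_0`. -/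
def IsEmptyIp (P : Iposet) : Prop := IsEmpty P.carrier ∧ P.n = 0 ∧ P.m = 0

/-- Singleton iposets: the underlying poset has exactly one point. -/
def IsSingletonIp (P : Iposet) : Prop := ∃ x : P.carrier, ∀ y : P.carrier, y = x

/-- Iposets with discrete underlying order. -/
def IsDiscrete (P : Iposet) : Prop := ∀ x y : P.carrier, x ≤ y → x = y

/-- Isomorphism of iposets: an order isomorphism of the underlying posets
commuting with the interface maps. -/
def Iso (P Q : Iposet) : Prop :=
  ∃ (hn : P.n = Q.n) (hm : P.m = Q.m) (f : P.carrier ≃ Q.carrier),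
    (∀ x y : P.carrier, x ≤ y ↔ f x ≤ f y) ∧
    (∀ i : Fin P.n, f (P.s i) = Q.s (Fin.cast hn i)) ∧
    (∀ i : Fin P.m, f (P.t i) = Q.t (Fin.cast hm i))

/-- `IsGluing P Q R` says that `R` is (a realization of) the gluing
composition `P * Q`: target interface points of `P` are identified with the
corresponding source interface points of `Q`, and every non-target point of
`P` is placed below every non-source point of `Q`. -/
def IsGluing (P Q R : Iposet) : Prop :=
  ∃ (h : P.m = Q.n) (hn : R.n = P.n) (hm : R.m = Q.m)
    (ip : P.carrier → R.carrier) (iq : Q.carrier → R.carrier),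
    Function.Injective ip ∧ Function.Injective iq ∧
    (∀ r : R.carrier, (∃ x, r = ip x) ∨ (∃ y, r = iq y)) ∧
    (∀ i : Fin P.m, ip (P.t i) = iq (Q.s (Fin.cast h i))) ∧
    (∀ (x : P.carrier) (y : Q.carrier), ip x = iq y →
      ∃ i : Fin P.m, x = P.t i ∧ y = Q.s (Fin.cast h i)) ∧
    (∀ u v : R.carrier, u ≤ v ↔
      ((∃ x y : P.carrier, u = ip x ∧ v = ip y ∧ x ≤ y) ∨
       (∃ x y : Q.carrier, u = iq x ∧ v = iq y ∧ x ≤ y) ∨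
       (∃ (x : P.carrier) (y : Q.carrier),
         u = ip x ∧ v = iq y ∧ x ∉ Set.range P.t ∧ y ∉ Set.range Q.s))) ∧
    (∀ i : Fin R.n, R.s i = ip (P.s (Fin.cast hn i))) ∧
    (∀ i : Fin R.m, R.t i = iq (Q.t (Fin.cast hm i)))

/-- `IsParallel P Q R` says that `R` is (a realization of) the parallel
composition `P ⊗ Q`: the disjoint union of the underlying posets, with
concatenated interfaces. -/
def IsParallel (P Q R : Iposet) : Prop :=
  ∃ (hn : P.n + Q.n = R.n) (hm : P.m + Q.m = R.m)
    (ip : P.carrier → R.carrier) (iq : Q.carrier → R.carrier),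
    Function.Injective ip ∧ Function.Injective iq ∧
    (∀ r : R.carrier, (∃ x, r = ip x) ∨ (∃ y, r = iq y)) ∧
    (∀ (x : P.carrier) (y : Q.carrier), ip x ≠ iq y) ∧
    (∀ u v : R.carrier, u ≤ v ↔
      ((∃ x y : P.carrier, u = ip x ∧ v = ip y ∧ x ≤ y) ∨
       (∃ x y : Q.carrier, u = iq x ∧ v = iq y ∧ x ≤ y))) ∧
    (∀ i : Fin P.n, R.s (Fin.cast hn (Fin.castAdd Q.n i)) = ip (P.s i)) ∧
    (∀ j : Fin Q.n, R.s (Fin.cast hn (Fin.natAdd P.n j)) = iq (Q.s j)) ∧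
    (∀ i : Fin P.m, R.t (Fin.cast hm (Fin.castAdd Q.m i)) = ip (P.t i)) ∧
    (∀ j : Fin Q.m, R.t (Fin.cast hm (Fin.natAdd P.m j)) = iq (Q.t j))

/-- The underlying poset is an interval order. -/
def IntvOrd (P : Iposet) : Prop :=
  ∀ w x y z : P.carrier, w < y → x < z → w < z ∨ x < y

end Iposet

/-- The class of finite interval orders is closed under gluing composition of
iposets: if the underlying posets of `P` and `Q` are interval orders, so is
that of `P * Q`. -/
theorem gluing_preserves_intervalOrder (P Q R : Iposet)
    (hglue : Iposet.IsGluing P Q R)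
    (hP : Iposet.IntvOrd P) (hQ : Iposet.IntvOrd Q) :
    Iposet.IntvOrd R := by
  obtain ⟨h, hn, hm, ip, iq, hip, hiq, hsurj, hid, hid', hord, hs, ht⟩ := hglue
  have lt_ip : ∀ a b : P.carrier, a < b → ip a < ip b := fun a b hab =>
    lt_of_le_of_ne ((hord _ _).2 (Or.inl ⟨a, b, rfl, rfl, hab.le⟩))
      (fun e => hab.ne (hip e))
  have lt_iq : ∀ a b : Q.carrier, a < b → iq a < iq b := fun a b hab =>
    lt_of_le_of_ne ((hord _ _).2 (Or.inr (Or.inl ⟨a, b, rfl, rfl, hab.le⟩)))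
      (fun e => hab.ne (hiq e))
  have lt_mix : ∀ (a : P.carrier) (d : Q.carrier), a ∉ Set.range P.t →
      d ∉ Set.range Q.s → ip a < iq d := by
    intro a d ha hd
    refine lt_of_le_of_ne ((hord _ _).2 (Or.inr (Or.inr ⟨a, d, rfl, rfl, ha, hd⟩))) ?_
    intro e
    obtain ⟨i, h1, _⟩ := hid' a d e
    exact ha ⟨i, h1.symm⟩
  have nt : ∀ a b : P.carrier, a < b → a ∉ Set.range P.t := by
    rintro a b hab ⟨i, rfl⟩; exact P.t_max i b hab
  have ns : ∀ c d : Q.carrier, c < d → d ∉ Set.range Q.s := by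
    rintro c d hcd ⟨i, rfl⟩; exact Q.s_min i c hcd
  intro w x y z hwy hxz
  obtain (⟨a, b, hw, hy, hab⟩ | ⟨a, b, hw, hy, hab⟩ | ⟨a, b, hw, hy, ha, hb⟩) :=
      (hord w y).1 hwy.le
  · have hab : a < b := lt_of_le_of_ne hab (fun e => hwy.ne (by rw [hw, hy, e]))
    obtain (⟨c, d, hx, hz, hcd⟩ | ⟨c, d, hx, hz, hcd⟩ | ⟨c, d, hx, hz, hc, hd⟩) :=
        (hord x z).1 hxz.le
    · have hcd : c < d := lt_of_le_of_ne hcd (fun e => hxz.ne (by rw [hx, hz, e]))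
      subst hw hy hx hz
      rcases hP a c b d hab hcd with h1 | h1
      · exact Or.inl (lt_ip _ _ h1)
      · exact Or.inr (lt_ip _ _ h1)
    · have hcd : c < d := lt_of_le_of_ne hcd (fun e => hxz.ne (by rw [hx, hz, e]))
      subst hw hy hx hz
      exact Or.inl (lt_mix a d (nt a b hab) (ns c d hcd))
    · subst hw hy hx hz
      exact Or.inl (lt_mix a d (nt a b hab) hd)
  · have hab : a < b := lt_of_le_of_ne hab (fun e => hwy.ne (by rw [hw, hy, e]))
    obtain (⟨c, d, hx, hz, hcd⟩ | ⟨c, d, hx, hz, hcd⟩ | ⟨c, d, hx, hz, hc, hd⟩) :=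
        (hord x z).1 hxz.le
    · have hcd : c < d := lt_of_le_of_ne hcd (fun e => hxz.ne (by rw [hx, hz, e]))
      subst hw hy hx hz
      exact Or.inr (lt_mix c b (nt c d hcd) (ns a b hab))
    · have hcd : c < d := lt_of_le_of_ne hcd (fun e => hxz.ne (by rw [hx, hz, e]))
      subst hw hy hx hz
      rcases hQ a c b d hab hcd with h1 | h1
      · exact Or.inl (lt_iq _ _ h1)
      · exact Or.inr (lt_iq _ _ h1)
    · subst hw hy hx hz
      exact Or.inr (lt_mix c b hc (ns a b hab))
  · obtain (⟨c, d, hx, hz, hcd⟩ | ⟨c, d, hx, hz, hcd⟩ | ⟨c, d, hx, hz, hc, hd⟩) :=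
        (hord x z).1 hxz.le
    · have hcd : c < d := lt_of_le_of_ne hcd (fun e => hxz.ne (by rw [hx, hz, e]))
      subst hw hy hx hz
      exact Or.inr (lt_mix c b (nt c d hcd) hb)
    · have hcd : c < d := lt_of_le_of_ne hcd (fun e => hxz.ne (by rw [hx, hz, e]))
      subst hw hy hx hz
      exact Or.inl (lt_mix a d ha (ns c d hcd))
    · subst hw hy hx hz
      exact Or.inl (lt_mix a d ha hd)
end

section
/- Gluing composition of iposets is associative: for iposets P : n → m, Q : m → k, R : k → l, we have (P * Q) * R ≅ P * (Q * R), and the identity iposets id_n = (id, [n], id) : n → n are left and right units for gluing. Hence iposets (up to isomorphism) form a category with objects the natural numbers. -/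
/-- `E` is (isomorphic to) an identity iposet `id_n = (id, [n], id) : n → n`:
discrete, with bijective source interface equal to the target interface. -/
def IsIdentityIp (E : Iposet) : Prop :=
  Iposet.IsDiscrete E ∧ Function.Surjective E.s ∧
    ∃ h : E.n = E.m, ∀ i : Fin E.n, E.t (Fin.cast h i) = E.s i

theorem Iposet.glue_unit_left (E P R : Iposet) (hE : IsIdentityIp E)
    (hG : Iposet.IsGluing E P R) : Iposet.Iso R P := by
  obtain ⟨hdisc, hsurj, hEnm, hts⟩ := hE
  obtain ⟨h, hn, hm, ie, ip, hie, hip, hcov, hid, hov, hord, hs, ht⟩ := hG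
  have htsurj : Function.Surjective E.t := fun e => by
    obtain ⟨i, hi⟩ := hsurj e
    exact ⟨Fin.cast hEnm i, by rw [hts i]; exact hi⟩
  have hipsurj : Function.Surjective ip := by
    intro r
    rcases hcov r with ⟨e, he⟩ | ⟨x, hx⟩
    · obtain ⟨j, rfl⟩ := htsurj e
      exact ⟨P.s (Fin.cast h j), (hid j).symm.trans he.symm⟩
    · exact ⟨x, hx.symm⟩
  have key : ∀ x y : P.carrier, ip x ≤ ip y ↔ x ≤ y := by
    intro x y
    rw [hord]
    constructor
    · rintro (⟨e, e', he, he', hee⟩ | ⟨x', y', hx, hy, hxy⟩ | ⟨e, y', he, hy, hnt, hns⟩)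
      · obtain rfl := hdisc e e' hee
        obtain rfl := hip (he.trans he'.symm)
        exact le_refl _
      · obtain rfl := hip hx
        obtain rfl := hip hy
        exact hxy
      · exact absurd (htsurj e) hnt
    · intro hxy
      exact Or.inr (Or.inl ⟨x, y, rfl, rfl, hxy⟩)
  let g := Equiv.ofBijective ip ⟨hip, hipsurj⟩
  have hn' : R.n = P.n := hn.trans (hEnm.trans h)
  refine ⟨hn', hm, g.symm, ?_, ?_, ?_⟩
  · intro u v
    have hu : ip (g.symm u) = u := g.apply_symm_apply u
    have hv : ip (g.symm v) = v := g.apply_symm_apply v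
    have hk := key (g.symm u) (g.symm v)
    rw [hu, hv] at hk
    exact hk
  · intro i
    have e1 : R.s i = ip (P.s (Fin.cast hn' i)) := by
      rw [hs i, ← hts (Fin.cast hn i)]
      exact hid (Fin.cast hEnm (Fin.cast hn i))
    rw [e1]
    exact g.symm_apply_apply _
  · intro i
    rw [ht i]
    exact g.symm_apply_apply _

theorem Iposet.glue_unit_right (E P R : Iposet) (hE : IsIdentityIp E)
    (hG : Iposet.IsGluing P E R) : Iposet.Iso R P := by
  obtain ⟨hdisc, hsurj, hEnm, hts⟩ := hE
  obtain ⟨h, hn, hm, ip, ie, hip, hie, hcov, hid, hov, hord, hs, ht⟩ := hG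
  have hipsurj : Function.Surjective ip := by
    intro r
    rcases hcov r with ⟨x, hx⟩ | ⟨e, he⟩
    · exact ⟨x, hx.symm⟩
    · obtain ⟨j, rfl⟩ := hsurj e
      exact ⟨P.t (Fin.cast h.symm j), (hid (Fin.cast h.symm j)).trans he.symm⟩
  have key : ∀ x y : P.carrier, ip x ≤ ip y ↔ x ≤ y := by
    intro x y
    rw [hord]
    constructor
    · rintro (⟨x', y', hx, hy, hxy⟩ | ⟨e, e', he, he', hee⟩ | ⟨x', e, hx, hy, hnt, hns⟩)
      · obtain rfl := hip hx
        obtain rfl := hip hy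
        exact hxy
      · obtain rfl := hdisc e e' hee
        obtain rfl := hip (he.trans he'.symm)
        exact le_refl _
      · exact absurd (hsurj e) hns
    · intro hxy
      exact Or.inl ⟨x, y, rfl, rfl, hxy⟩
  let g := Equiv.ofBijective ip ⟨hip, hipsurj⟩
  have hm' : R.m = P.m := (hm.trans hEnm.symm).trans h.symm
  refine ⟨hn, hm', g.symm, ?_, ?_, ?_⟩
  · intro u v
    have hu : ip (g.symm u) = u := g.apply_symm_apply u
    have hv : ip (g.symm v) = v := g.apply_symm_apply v
    have hk := key (g.symm u) (g.symm v)
    rw [hu, hv] at hk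
    exact hk
  · intro i
    rw [hs i]
    exact g.symm_apply_apply _
  · intro i
    have e1 : R.t i = ip (P.t (Fin.cast hm' i)) := by
      rw [ht i]
      have e2 : E.t (Fin.cast hm i) = E.s (Fin.cast hEnm.symm (Fin.cast hm i)) :=
        hts (Fin.cast hEnm.symm (Fin.cast hm i))
      rw [e2]
      exact (hid (Fin.cast hm' i)).symm
    rw [e1]
    exact g.symm_apply_apply _

theorem Iposet.glue_assoc (P Q R A B C D : Iposet)
    (hGA : Iposet.IsGluing P Q A) (hGB : Iposet.IsGluing A R B)
    (hGC : Iposet.IsGluing Q R C) (hGD : Iposet.IsGluing P C D) :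
    Iposet.Iso B D := by
  classical
  obtain ⟨h1, hn1, hm1, ap, aq, hap, haq, hAcov, hAid, hAov, hAord, hAs, hAt⟩ := hGA
  obtain ⟨h2, hn2, hm2, ba, br, hba, hbr, hBcov, hBid, hBov, hBord, hBs, hBt⟩ := hGB
  obtain ⟨h3, hn3, hm3, cq, cr, hcq, hcr, hCcov, hCid, hCov, hCord, hCs, hCt⟩ := hGC
  obtain ⟨h4, hn4, hm4, dp, dc, hdp, hdc, hDcov, hDid, hDov, hDord, hDs, hDt⟩ := hGD
  -- identifications inside B
  have idPQ : ∀ i : Fin P.m, ba (ap (P.t i)) = ba (aq (Q.s (Fin.cast h1 i))) :=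
    fun i => congrArg ba (hAid i)
  have aqAt : ∀ j : Fin Q.m, aq (Q.t j) = A.t (Fin.cast hm1.symm j) :=
    fun j => (hAt (Fin.cast hm1.symm j)).symm
  have idQR : ∀ j : Fin Q.m, ba (aq (Q.t j)) = br (R.s (Fin.cast h3 j)) := by
    intro j
    rw [aqAt j]
    exact hBid (Fin.cast hm1.symm j)
  -- identifications inside D
  have idPQ' : ∀ i : Fin P.m, dp (P.t i) = dc (cq (Q.s (Fin.cast h1 i))) := by
    intro i
    rw [hDid i]
    exact congrArg dc (hCs (Fin.cast h4 i))
  have idQR' : ∀ j : Fin Q.m, dc (cq (Q.t j)) = dc (cr (R.s (Fin.cast h3 j))) :=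
    fun j => congrArg dc (hCid j)
  -- overlap inversions in B
  have ovPQ : ∀ p q, ba (ap p) = ba (aq q) → ∃ i, p = P.t i ∧ q = Q.s (Fin.cast h1 i) :=
    fun p q h => hAov p q (hba h)
  have ovQR : ∀ q r, ba (aq q) = br r → ∃ j, q = Q.t j ∧ r = R.s (Fin.cast h3 j) := by
    intro q r h
    obtain ⟨k, hk1, hk2⟩ := hBov (aq q) r h
    exact ⟨Fin.cast hm1 k, haq (hk1.trans (hAt k)), hk2⟩
  have ovPR : ∀ p r, ba (ap p) = br r →
      ∃ i j, p = P.t i ∧ Q.s (Fin.cast h1 i) = Q.t j ∧ r = R.s (Fin.cast h3 j) := by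
    intro p r h
    obtain ⟨k, hk1, hk2⟩ := hBov (ap p) r h
    obtain ⟨i, hi1, hi2⟩ := hAov p (Q.t (Fin.cast hm1 k)) (hk1.trans (hAt k))
    exact ⟨i, Fin.cast hm1 k, hi1, hi2.symm, hk2⟩
  -- overlap inversions in D
  have ovPQ' : ∀ p q, dp p = dc (cq q) → ∃ i, p = P.t i ∧ q = Q.s (Fin.cast h1 i) := by
    intro p q h
    obtain ⟨i, hi1, hi2⟩ := hDov p (cq q) h
    exact ⟨i, hi1, hcq (hi2.trans (hCs (Fin.cast h4 i)))⟩
  have ovQR' : ∀ q r, dc (cq q) = dc (cr r) → ∃ j, q = Q.t j ∧ r = R.s (Fin.cast h3 j) :=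
    fun q r h => hCov q r (hdc h)
  have ovPR' : ∀ p r, dp p = dc (cr r) →
      ∃ i j, p = P.t i ∧ Q.s (Fin.cast h1 i) = Q.t j ∧ r = R.s (Fin.cast h3 j) := by
    intro p r h
    obtain ⟨i, hi1, hi2⟩ := hDov p (cr r) h
    obtain ⟨j, hj1, hj2⟩ :=
      hCov (Q.s (Fin.cast h1 i)) r ((hCs (Fin.cast h4 i)).symm.trans hi2.symm)
    exact ⟨i, j, hi1, hj1, hj2⟩
  -- coverage
  have coverB : ∀ b : B.carrier,
      (∃ p, b = ba (ap p)) ∨ (∃ q, b = ba (aq q)) ∨ (∃ r, b = br r) := by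
    intro b
    rcases hBcov b with ⟨a, ha⟩ | ⟨r, hr⟩
    · rcases hAcov a with ⟨p, hp⟩ | ⟨q, hq⟩
      · exact Or.inl ⟨p, by rw [ha, hp]⟩
      · exact Or.inr (Or.inl ⟨q, by rw [ha, hq]⟩)
    · exact Or.inr (Or.inr ⟨r, hr⟩)
  have coverD : ∀ d : D.carrier,
      (∃ p, d = dp p) ∨ (∃ q, d = dc (cq q)) ∨ (∃ r, d = dc (cr r)) := by
    intro d
    rcases hDcov d with ⟨p, hp⟩ | ⟨c, hc⟩
    · exact Or.inl ⟨p, hp⟩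
    · rcases hCcov c with ⟨q, hq⟩ | ⟨r, hr⟩
      · exact Or.inr (Or.inl ⟨q, by rw [hc, hq]⟩)
      · exact Or.inr (Or.inr ⟨r, by rw [hc, hr]⟩)
  -- range facts
  have nAt_of_nQt : ∀ q, q ∉ Set.range Q.t → aq q ∉ Set.range A.t := by
    intro q hq h
    obtain ⟨k, hk⟩ := h
    exact hq ⟨Fin.cast hm1 k, haq ((hAt k).symm.trans hk)⟩
  have nAt_of_nPt : ∀ p, p ∉ Set.range P.t → ap p ∉ Set.range A.t := by
    intro p hp h
    obtain ⟨k, hk⟩ := h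
    obtain ⟨i, hi, _⟩ := hAov p (Q.t (Fin.cast hm1 k)) (hk.symm.trans (hAt k))
    exact hp ⟨i, hi.symm⟩
  have nCs_of_nQs : ∀ q, q ∉ Set.range Q.s → cq q ∉ Set.range C.s := by
    intro q hq h
    obtain ⟨k, hk⟩ := h
    exact hq ⟨Fin.cast hn3 k, hcq ((hCs k).symm.trans hk)⟩
  have nCs_of_nRs : ∀ r, r ∉ Set.range R.s → cr r ∉ Set.range C.s := by
    intro r hr h
    obtain ⟨k, hk⟩ := h
    obtain ⟨j, _, hj2⟩ := hCov (Q.s (Fin.cast hn3 k)) r ((hCs k).symm.trans hk)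
    exact hr ⟨_, hj2.symm⟩
  -- master characterization of the order on B
  have masterB : ∀ u v : B.carrier, u ≤ v ↔
      ((∃ p p', u = ba (ap p) ∧ v = ba (ap p') ∧ p ≤ p') ∨
       (∃ q q', u = ba (aq q) ∧ v = ba (aq q') ∧ q ≤ q') ∨
       (∃ r r', u = br r ∧ v = br r' ∧ r ≤ r') ∨
       (∃ p q, u = ba (ap p) ∧ v = ba (aq q) ∧ p ∉ Set.range P.t ∧ q ∉ Set.range Q.s) ∨
       (∃ q r, u = ba (aq q) ∧ v = br r ∧ q ∉ Set.range Q.t ∧ r ∉ Set.range R.s) ∨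
       (∃ p r, u = ba (ap p) ∧ v = br r ∧ p ∉ Set.range P.t ∧ r ∉ Set.range R.s)) := by
    intro u v
    rw [hBord]
    constructor
    · rintro (⟨a, a', hu, hv, haa⟩ | ⟨r, r', hu, hv, hrr⟩ | ⟨a, r, hu, hv, hna, hnr⟩)
      · rw [hAord] at haa
        rcases haa with ⟨p, p', e1, e2, e3⟩ | ⟨q, q', e1, e2, e3⟩ | ⟨p, q, e1, e2, e3, e4⟩
        · exact Or.inl ⟨p, p', by rw [hu, e1], by rw [hv, e2], e3⟩
        · exact Or.inr (Or.inl ⟨q, q', by rw [hu, e1], by rw [hv, e2], e3⟩)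
        · exact Or.inr (Or.inr (Or.inr (Or.inl
            ⟨p, q, by rw [hu, e1], by rw [hv, e2], e3, e4⟩)))
      · exact Or.inr (Or.inr (Or.inl ⟨r, r', hu, hv, hrr⟩))
      · rcases hAcov a with ⟨p, hp⟩ | ⟨q, hq⟩
        · by_cases hpt : p ∈ Set.range P.t
          · obtain ⟨i, rfl⟩ := hpt
            have hq0 : Q.s (Fin.cast h1 i) ∉ Set.range Q.t := by
              rintro ⟨j, hj⟩
              refine hna ⟨Fin.cast hm1.symm j, ?_⟩
              rw [hp, hAid i, ← hj]
              exact (aqAt j).symm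
            refine Or.inr (Or.inr (Or.inr (Or.inr (Or.inl
              ⟨Q.s (Fin.cast h1 i), r, ?_, hv, hq0, hnr⟩))))
            rw [hu, hp, hAid i]
          · exact Or.inr (Or.inr (Or.inr (Or.inr (Or.inr
              ⟨p, r, by rw [hu, hp], hv, hpt, hnr⟩))))
        · have hq0 : q ∉ Set.range Q.t := by
            rintro ⟨j, rfl⟩
            exact hna ⟨Fin.cast hm1.symm j, (aqAt j).symm.trans hq.symm⟩
          exact Or.inr (Or.inr (Or.inr (Or.inr (Or.inl
            ⟨q, r, by rw [hu, hq], hv, hq0, hnr⟩))))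
    · rintro (⟨p, p', hu, hv, hle⟩ | ⟨q, q', hu, hv, hle⟩ | ⟨r, r', hu, hv, hle⟩ |
        ⟨p, q, hu, hv, hx, hy⟩ | ⟨q, r, hu, hv, hx, hy⟩ | ⟨p, r, hu, hv, hx, hy⟩)
      · exact Or.inl ⟨ap p, ap p', hu, hv, (hAord _ _).mpr (Or.inl ⟨p, p', rfl, rfl, hle⟩)⟩
      · exact Or.inl ⟨aq q, aq q', hu, hv,
          (hAord _ _).mpr (Or.inr (Or.inl ⟨q, q', rfl, rfl, hle⟩))⟩
      · exact Or.inr (Or.inl ⟨r, r', hu, hv, hle⟩)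
      · exact Or.inl ⟨ap p, aq q, hu, hv,
          (hAord _ _).mpr (Or.inr (Or.inr ⟨p, q, rfl, rfl, hx, hy⟩))⟩
      · exact Or.inr (Or.inr ⟨aq q, r, hu, hv, nAt_of_nQt q hx, hy⟩)
      · exact Or.inr (Or.inr ⟨ap p, r, hu, hv, nAt_of_nPt p hx, hy⟩)
  -- master characterization of the order on D
  have masterD : ∀ u v : D.carrier, u ≤ v ↔
      ((∃ p p', u = dp p ∧ v = dp p' ∧ p ≤ p') ∨
       (∃ q q', u = dc (cq q) ∧ v = dc (cq q') ∧ q ≤ q') ∨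
       (∃ r r', u = dc (cr r) ∧ v = dc (cr r') ∧ r ≤ r') ∨
       (∃ p q, u = dp p ∧ v = dc (cq q) ∧ p ∉ Set.range P.t ∧ q ∉ Set.range Q.s) ∨
       (∃ q r, u = dc (cq q) ∧ v = dc (cr r) ∧ q ∉ Set.range Q.t ∧ r ∉ Set.range R.s) ∨
       (∃ p r, u = dp p ∧ v = dc (cr r) ∧ p ∉ Set.range P.t ∧ r ∉ Set.range R.s)) := by
    intro u v
    rw [hDord]
    constructor
    · rintro (⟨p, p', hu, hv, hpp⟩ | ⟨c, c', hu, hv, hcc⟩ | ⟨p, c, hu, hv, hnp, hnc⟩)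
      · exact Or.inl ⟨p, p', hu, hv, hpp⟩
      · rw [hCord] at hcc
        rcases hcc with ⟨q, q', e1, e2, e3⟩ | ⟨r, r', e1, e2, e3⟩ | ⟨q, r, e1, e2, e3, e4⟩
        · exact Or.inr (Or.inl ⟨q, q', by rw [hu, e1], by rw [hv, e2], e3⟩)
        · exact Or.inr (Or.inr (Or.inl ⟨r, r', by rw [hu, e1], by rw [hv, e2], e3⟩))
        · exact Or.inr (Or.inr (Or.inr (Or.inr (Or.inl
            ⟨q, r, by rw [hu, e1], by rw [hv, e2], e3, e4⟩))))
      · rcases hCcov c with ⟨q, hq⟩ | ⟨r, hr⟩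
        · have hq0 : q ∉ Set.range Q.s := by
            rintro ⟨k, hk⟩
            refine hnc ⟨Fin.cast hn3.symm k, ?_⟩
            exact (hCs (Fin.cast hn3.symm k)).trans ((congrArg cq hk).trans hq.symm)
          exact Or.inr (Or.inr (Or.inr (Or.inl ⟨p, q, hu, by rw [hv, hq], hnp, hq0⟩)))
        · by_cases hrs : r ∈ Set.range R.s
          · obtain ⟨j, rfl⟩ := hrs
            have hcq0 : c = cq (Q.t (Fin.cast h3.symm j)) :=
              hr.trans (hCid (Fin.cast h3.symm j)).symm
            have hq0 : Q.t (Fin.cast h3.symm j) ∉ Set.range Q.s := by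
              rintro ⟨k, hk⟩
              refine hnc ⟨Fin.cast hn3.symm k, ?_⟩
              exact (hCs (Fin.cast hn3.symm k)).trans ((congrArg cq hk).trans hcq0.symm)
            exact Or.inr (Or.inr (Or.inr (Or.inl
              ⟨p, Q.t (Fin.cast h3.symm j), hu, by rw [hv, hcq0], hnp, hq0⟩)))
          · exact Or.inr (Or.inr (Or.inr (Or.inr (Or.inr
              ⟨p, r, hu, by rw [hv, hr], hnp, hrs⟩))))
    · rintro (⟨p, p', hu, hv, hle⟩ | ⟨q, q', hu, hv, hle⟩ | ⟨r, r', hu, hv, hle⟩ |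
        ⟨p, q, hu, hv, hx, hy⟩ | ⟨q, r, hu, hv, hx, hy⟩ | ⟨p, r, hu, hv, hx, hy⟩)
      · exact Or.inl ⟨p, p', hu, hv, hle⟩
      · exact Or.inr (Or.inl ⟨cq q, cq q', hu, hv,
          (hCord _ _).mpr (Or.inl ⟨q, q', rfl, rfl, hle⟩)⟩)
      · exact Or.inr (Or.inl ⟨cr r, cr r', hu, hv,
          (hCord _ _).mpr (Or.inr (Or.inl ⟨r, r', rfl, rfl, hle⟩))⟩)
      · exact Or.inr (Or.inr ⟨p, cq q, hu, hv, hx, nCs_of_nQs q hy⟩)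
      · exact Or.inr (Or.inl ⟨cq q, cr r, hu, hv,
          (hCord _ _).mpr (Or.inr (Or.inr ⟨q, r, rfl, rfl, hx, hy⟩))⟩)
      · exact Or.inr (Or.inr ⟨p, cr r, hu, hv, hx, nCs_of_nRs r hy⟩)
  -- the comparison map
  have hcov3 : ∀ b : B.carrier, ¬(∃ p, b = ba (ap p)) → ¬(∃ q, b = ba (aq q)) →
      ∃ r, b = br r := by
    intro b h h'
    rcases coverB b with hp | hq | hr
    · exact absurd hp h
    · exact absurd hq h'
    · exact hr
  obtain ⟨f, hfP, hfQ, hfR⟩ : ∃ f : B.carrier → D.carrier,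
      (∀ p, f (ba (ap p)) = dp p) ∧ (∀ q, f (ba (aq q)) = dc (cq q)) ∧
      (∀ r, f (br r) = dc (cr r)) := by
    refine ⟨fun b => if h : ∃ p, b = ba (ap p) then dp h.choose
      else if h' : ∃ q, b = ba (aq q) then dc (cq h'.choose)
      else dc (cr (hcov3 b h h').choose), ?_, ?_, ?_⟩
    · intro p
      have h : ∃ p', ba (ap p) = ba (ap p') := ⟨p, rfl⟩
      dsimp only
      rw [dif_pos h]
      exact congrArg dp (hap (hba h.choose_spec)).symm
    · intro q
      dsimp only
      by_cases h : ∃ p, ba (aq q) = ba (ap p)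
      · rw [dif_pos h]
        obtain ⟨i, hi1, hi2⟩ := ovPQ h.choose q h.choose_spec.symm
        rw [hi1, hi2]
        exact idPQ' i
      · have h' : ∃ q', ba (aq q) = ba (aq q') := ⟨q, rfl⟩
        rw [dif_neg h, dif_pos h']
        exact congrArg (fun z => dc (cq z)) (haq (hba h'.choose_spec)).symm
    · intro r
      dsimp only
      by_cases h : ∃ p, br r = ba (ap p)
      · rw [dif_pos h]
        obtain ⟨i, j, hi1, hij, hj2⟩ := ovPR h.choose r h.choose_spec.symm
        rw [hi1, idPQ' i, hij, idQR' j, hj2]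
      · by_cases h' : ∃ q, br r = ba (aq q)
        · rw [dif_neg h, dif_pos h']
          obtain ⟨j, hj1, hj2⟩ := ovQR h'.choose r h'.choose_spec.symm
          rw [hj1, idQR' j, hj2]
        · rw [dif_neg h, dif_neg h']
          exact congrArg (fun z => dc (cr z)) (hbr (hcov3 _ h h').choose_spec).symm
  -- representation transfer lemmas
  have repP : ∀ (u : B.carrier) (p : P.carrier), f u = dp p → u = ba (ap p) := by
    intro u p hu
    rcases coverB u with ⟨p', hp'⟩ | ⟨q, hq⟩ | ⟨r, hr⟩
    · rw [hp'] at hu ⊢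
      rw [hfP] at hu
      rw [hdp hu]
    · rw [hq] at hu ⊢
      rw [hfQ] at hu
      obtain ⟨i, hi1, hi2⟩ := ovPQ' p q hu.symm
      rw [hi1, hi2]
      exact (idPQ i).symm
    · rw [hr] at hu ⊢
      rw [hfR] at hu
      obtain ⟨i, j, hi1, hij, hj2⟩ := ovPR' p r hu.symm
      rw [hj2, hi1, ← idQR j, ← hij, ← idPQ i]
  have repQ : ∀ (u : B.carrier) (q : Q.carrier), f u = dc (cq q) → u = ba (aq q) := by
    intro u q hu
    rcases coverB u with ⟨p', hp'⟩ | ⟨q', hq'⟩ | ⟨r, hr⟩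
    · rw [hp'] at hu ⊢
      rw [hfP] at hu
      obtain ⟨i, hi1, hi2⟩ := ovPQ' p' q hu
      rw [hi1, hi2]
      exact idPQ i
    · rw [hq'] at hu ⊢
      rw [hfQ] at hu
      rw [hcq (hdc hu)]
    · rw [hr] at hu ⊢
      rw [hfR] at hu
      obtain ⟨j, hj1, hj2⟩ := ovQR' q r hu.symm
      rw [hj2, hj1]
      exact (idQR j).symm
  have repR : ∀ (u : B.carrier) (r : R.carrier), f u = dc (cr r) → u = br r := by
    intro u r hu
    rcases coverB u with ⟨p', hp'⟩ | ⟨q', hq'⟩ | ⟨r', hr'⟩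
    · rw [hp'] at hu ⊢
      rw [hfP] at hu
      obtain ⟨i, j, hi1, hij, hj2⟩ := ovPR' p' r hu
      rw [hi1, idPQ i, hij, idQR j, hj2]
    · rw [hq'] at hu ⊢
      rw [hfQ] at hu
      obtain ⟨j, hj1, hj2⟩ := ovQR' q' r (hdc hu ▸ hu)
      rw [hj1, idQR j, hj2]
    · rw [hr'] at hu ⊢
      rw [hfR] at hu
      rw [hcr (hdc hu)]
  -- bijectivity
  have finj : Function.Injective f := by
    intro u v huv
    rcases coverB v with ⟨p, hp⟩ | ⟨q, hq⟩ | ⟨r, hr⟩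
    · have hv : f v = dp p := by rw [hp, hfP]
      rw [hp]
      exact repP u p (huv.trans hv)
    · have hv : f v = dc (cq q) := by rw [hq, hfQ]
      rw [hq]
      exact repQ u q (huv.trans hv)
    · have hv : f v = dc (cr r) := by rw [hr, hfR]
      rw [hr]
      exact repR u r (huv.trans hv)
  have fsurj : Function.Surjective f := by
    intro d
    rcases coverD d with ⟨p, hp⟩ | ⟨q, hq⟩ | ⟨r, hr⟩
    · exact ⟨ba (ap p), by rw [hfP]; exact hp.symm⟩
    · exact ⟨ba (aq q), by rw [hfQ]; exact hq.symm⟩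
    · exact ⟨br r, by rw [hfR]; exact hr.symm⟩
  -- order preservation
  have orderf : ∀ x y : B.carrier, x ≤ y ↔ f x ≤ f y := by
    intro x y
    rw [masterB x y, masterD (f x) (f y)]
    constructor
    · rintro (⟨p, p', hu, hv, hle⟩ | ⟨q, q', hu, hv, hle⟩ | ⟨r, r', hu, hv, hle⟩ |
        ⟨p, q, hu, hv, hx, hy⟩ | ⟨q, r, hu, hv, hx, hy⟩ | ⟨p, r, hu, hv, hx, hy⟩)
      · exact Or.inl ⟨p, p', by rw [hu, hfP], by rw [hv, hfP], hle⟩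
      · exact Or.inr (Or.inl ⟨q, q', by rw [hu, hfQ], by rw [hv, hfQ], hle⟩)
      · exact Or.inr (Or.inr (Or.inl ⟨r, r', by rw [hu, hfR], by rw [hv, hfR], hle⟩))
      · exact Or.inr (Or.inr (Or.inr (Or.inl
          ⟨p, q, by rw [hu, hfP], by rw [hv, hfQ], hx, hy⟩)))
      · exact Or.inr (Or.inr (Or.inr (Or.inr (Or.inl
          ⟨q, r, by rw [hu, hfQ], by rw [hv, hfR], hx, hy⟩))))
      · exact Or.inr (Or.inr (Or.inr (Or.inr (Or.inr
          ⟨p, r, by rw [hu, hfP], by rw [hv, hfR], hx, hy⟩))))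
    · rintro (⟨p, p', hu, hv, hle⟩ | ⟨q, q', hu, hv, hle⟩ | ⟨r, r', hu, hv, hle⟩ |
        ⟨p, q, hu, hv, hx, hy⟩ | ⟨q, r, hu, hv, hx, hy⟩ | ⟨p, r, hu, hv, hx, hy⟩)
      · exact Or.inl ⟨p, p', repP x p hu, repP y p' hv, hle⟩
      · exact Or.inr (Or.inl ⟨q, q', repQ x q hu, repQ y q' hv, hle⟩)
      · exact Or.inr (Or.inr (Or.inl ⟨r, r', repR x r hu, repR y r' hv, hle⟩))
      · exact Or.inr (Or.inr (Or.inr (Or.inl ⟨p, q, repP x p hu, repQ y q hv, hx, hy⟩)))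
      · exact Or.inr (Or.inr (Or.inr (Or.inr (Or.inl
          ⟨q, r, repQ x q hu, repR y r hv, hx, hy⟩))))
      · exact Or.inr (Or.inr (Or.inr (Or.inr (Or.inr
          ⟨p, r, repP x p hu, repR y r hv, hx, hy⟩))))
  have hn : B.n = D.n := hn2.trans (hn1.trans hn4.symm)
  have hm : B.m = D.m := hm2.trans (hm3.symm.trans hm4.symm)
  refine ⟨hn, hm, Equiv.ofBijective f ⟨finj, fsurj⟩, orderf, ?_, ?_⟩
  · intro i
    show f (B.s i) = D.s (Fin.cast hn i)
    rw [hBs i, hAs (Fin.cast hn2 i), hfP, hDs (Fin.cast hn i)]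
    rfl
  · intro i
    show f (B.t i) = D.t (Fin.cast hm i)
    rw [hBt i, hfR, hDt (Fin.cast hm i)]
    exact congrArg dc (hCt (Fin.cast hm4 (Fin.cast hm i))).symm

/-- Gluing composition of iposets is associative, and the identity iposets
`id_n` are left and right units for it; hence iposets up to isomorphism form
a category with objects the natural numbers. -/
theorem gluing_assoc_and_units :
    (∀ P Q R A B C D : Iposet,
      Iposet.IsGluing P Q A → Iposet.IsGluing A R B →
      Iposet.IsGluing Q R C → Iposet.IsGluing P C D →
      Iposet.Iso B D) ∧
    (∀ E P R : Iposet, IsIdentityIp E → Iposet.IsGluing E P R → Iposet.Iso R P) ∧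
    (∀ E P R : Iposet, IsIdentityIp E → Iposet.IsGluing P E R → Iposet.Iso R P) := by
  refine ⟨fun P Q R A B C D hA hB hC hD => Iposet.glue_assoc P Q R A B C D hA hB hC hD,
    fun E P R hE hG => Iposet.glue_unit_left E P R hE hG,
    fun E P R hE hG => Iposet.glue_unit_right E P R hE hG⟩
end

section
/- Lax interchange: for iposets P, P', Q, Q' (with matching interfaces so that both sides are defined), (P ⊗ P') * (Q ⊗ Q') ⪯ (P * Q) ⊗ (P' * Q'), where X ⪯ Y means there is a bijective-on-points iposet morphism from Y to X; concretely, the two iposets have the same points and interfaces, and every order relation of (P*Q) ⊗ (P'*Q') is also a relation of (P ⊗ P') * (Q ⊗ Q'). -/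
/-- Lax interchange: `(P ⊗ P') * (Q ⊗ Q') ⪯ (P * Q) ⊗ (P' * Q')`.
Here `L = (P ⊗ P') * (Q ⊗ Q')` and `Rt = (P * Q) ⊗ (P' * Q')` have the same
points and interfaces, and there is a bijective iposet morphism `Rt → L`:
every order relation of `Rt` is also one of `L`. -/
theorem lax_interchange (P P' Q Q' A B L C C' Rt : Iposet)
    (hA : Iposet.IsParallel P P' A) (hB : Iposet.IsParallel Q Q' B)
    (hL : Iposet.IsGluing A B L)
    (hC : Iposet.IsGluing P Q C) (hC' : Iposet.IsGluing P' Q' C')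
    (hR : Iposet.IsParallel C C' Rt) :
    ∃ (hn : Rt.n = L.n) (hm : Rt.m = L.m) (f : Rt.carrier ≃ L.carrier),
      (∀ x y : Rt.carrier, x ≤ y → f x ≤ f y) ∧
      (∀ i : Fin Rt.n, f (Rt.s i) = L.s (Fin.cast hn i)) ∧
      (∀ i : Fin Rt.m, f (Rt.t i) = L.t (Fin.cast hm i)) := by
  classical
  obtain ⟨hnA, hmA, aP, aP', aPinj, aP'inj, covA, disjA, ordA, sA1, sA2, tA1, tA2⟩ := hA
  obtain ⟨hnB, hmB, bQ, bQ', bQinj, bQ'inj, covB, disjB, ordB, sB1, sB2, tB1, tB2⟩ := hB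
  obtain ⟨hAB, hnL, hmL, lA, lB, lAinj, lBinj, covL, glueL, glueLonly, ordL, sL, tL⟩ := hL
  obtain ⟨hPQ, hnC, hmC, cP, cQ, cPinj, cQinj, covC, glueC, glueConly, ordC, sC, tC⟩ := hC
  obtain ⟨hPQ', hnC', hmC', cP', cQ', cP'inj, cQ'inj, covC', glueC', glueC'only, ordC', sC', tC'⟩ := hC'
  obtain ⟨hnR, hmR, rC, rC', rCinj, rC'inj, covR, disjR, ordR, sR1, sR2, tR1, tR2⟩ := hR
  -- decomposition of A.t
  have tA_cases : ∀ k : Fin A.m,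
      (∃ i : Fin P.m, A.t k = aP (P.t i) ∧ (k : ℕ) = i) ∨
      (∃ i : Fin P'.m, A.t k = aP' (P'.t i) ∧ (k : ℕ) = P.m + i) := by
    intro k
    by_cases hk : (k : ℕ) < P.m
    · left
      refine ⟨⟨k, hk⟩, ?_, rfl⟩
      have hkk : k = Fin.cast hmA (Fin.castAdd P'.m ⟨k, hk⟩) := by apply Fin.ext; simp
      conv_lhs => rw [hkk]
      rw [tA1]
    · right
      have hk2 : (k : ℕ) - P.m < P'.m := by have := k.isLt; omega
      refine ⟨⟨(k : ℕ) - P.m, hk2⟩, ?_, by simp; omega⟩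
      have hkk : k = Fin.cast hmA (Fin.natAdd P.m ⟨(k : ℕ) - P.m, hk2⟩) := by
        apply Fin.ext; simp; omega
      conv_lhs => rw [hkk]
      rw [tA2]
  -- decomposition of B.s
  have sB_cases : ∀ k : Fin B.n,
      (∃ j : Fin Q.n, B.s k = bQ (Q.s j) ∧ (k : ℕ) = j) ∨
      (∃ j : Fin Q'.n, B.s k = bQ' (Q'.s j) ∧ (k : ℕ) = Q.n + j) := by
    intro k
    by_cases hk : (k : ℕ) < Q.n
    · left
      refine ⟨⟨k, hk⟩, ?_, rfl⟩
      have hkk : k = Fin.cast hnB (Fin.castAdd Q'.n ⟨k, hk⟩) := by apply Fin.ext; simp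
      conv_lhs => rw [hkk]
      rw [sB1]
    · right
      have hk2 : (k : ℕ) - Q.n < Q'.n := by have := k.isLt; omega
      refine ⟨⟨(k : ℕ) - Q.n, hk2⟩, ?_, by simp; omega⟩
      have hkk : k = Fin.cast hnB (Fin.natAdd Q.n ⟨(k : ℕ) - Q.n, hk2⟩) := by
        apply Fin.ext; simp; omega
      conv_lhs => rw [hkk]
      rw [sB2]
  have notTP : ∀ (p : P.carrier) (k : Fin A.m), aP p = A.t k →
      ∃ i : Fin P.m, p = P.t i ∧ (k : ℕ) = i := by
    intro p k h
    rcases tA_cases k with ⟨i, h1, h2⟩ | ⟨i, h1, h2⟩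
    · exact ⟨i, aPinj (h.trans h1), h2⟩
    · exact absurd (h.trans h1) (disjA p _)
  have notTP' : ∀ (p' : P'.carrier) (k : Fin A.m), aP' p' = A.t k →
      ∃ i : Fin P'.m, p' = P'.t i ∧ (k : ℕ) = P.m + i := by
    intro p' k h
    rcases tA_cases k with ⟨i, h1, h2⟩ | ⟨i, h1, h2⟩
    · exact absurd (h.trans h1).symm (disjA _ p')
    · exact ⟨i, aP'inj (h.trans h1), h2⟩
  have notSQ : ∀ (q : Q.carrier) (k : Fin B.n), bQ q = B.s k →
      ∃ j : Fin Q.n, q = Q.s j ∧ (k : ℕ) = j := by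
    intro q k h
    rcases sB_cases k with ⟨j, h1, h2⟩ | ⟨j, h1, h2⟩
    · exact ⟨j, bQinj (h.trans h1), h2⟩
    · exact absurd (h.trans h1) (disjB q _)
  have notSQ' : ∀ (q' : Q'.carrier) (k : Fin B.n), bQ' q' = B.s k →
      ∃ j : Fin Q'.n, q' = Q'.s j ∧ (k : ℕ) = Q.n + j := by
    intro q' k h
    rcases sB_cases k with ⟨j, h1, h2⟩ | ⟨j, h1, h2⟩
    · exact absurd (h.trans h1).symm (disjB _ q')
    · exact ⟨j, bQ'inj (h.trans h1), h2⟩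
  -- key identification lemmas in L
  have key1 : ∀ i : Fin P.m, lA (aP (P.t i)) = lB (bQ (Q.s (Fin.cast hPQ i))) := by
    intro i
    rw [← tA1 i, glueL]
    have hidx : Fin.cast hAB (Fin.cast hmA (Fin.castAdd P'.m i))
        = Fin.cast hnB (Fin.castAdd Q'.n (Fin.cast hPQ i)) := by apply Fin.ext; simp
    rw [hidx, sB1]
  have key1' : ∀ i : Fin P'.m, lA (aP' (P'.t i)) = lB (bQ' (Q'.s (Fin.cast hPQ' i))) := by
    intro i
    rw [← tA2 i, glueL]
    have hidx : Fin.cast hAB (Fin.cast hmA (Fin.natAdd P.m i))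
        = Fin.cast hnB (Fin.natAdd Q.n (Fin.cast hPQ' i)) := by
      apply Fin.ext; simp; omega
    rw [hidx, sB2]
  have crossPQ : ∀ (p : P.carrier) (q : Q.carrier), lA (aP p) = lB (bQ q) →
      ∃ i : Fin P.m, p = P.t i ∧ q = Q.s (Fin.cast hPQ i) := by
    intro p q h
    obtain ⟨k, hk1, hk2⟩ := glueLonly _ _ h
    obtain ⟨i, hpi, hki⟩ := notTP p k hk1
    rcases sB_cases (Fin.cast hAB k) with ⟨j, h1, h2⟩ | ⟨j, h1, h2⟩
    · refine ⟨i, hpi, ?_⟩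
      have hq : q = Q.s j := bQinj (hk2.trans h1)
      have hj : j = Fin.cast hPQ i := by apply Fin.ext; simp at h2 ⊢; omega
      rw [hq, hj]
    · exact absurd (hk2.trans h1) (disjB q _)
  have crossPQ' : ∀ (p : P.carrier) (q' : Q'.carrier), lA (aP p) = lB (bQ' q') → False := by
    intro p q' h
    obtain ⟨k, hk1, hk2⟩ := glueLonly _ _ h
    obtain ⟨i, hpi, hki⟩ := notTP p k hk1
    rcases sB_cases (Fin.cast hAB k) with ⟨j, h1, h2⟩ | ⟨j, h1, h2⟩
    · exact absurd (hk2.trans h1).symm (disjB _ q')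
    · simp at h2
      have := i.isLt
      omega
  have crossP'Q : ∀ (p' : P'.carrier) (q : Q.carrier), lA (aP' p') = lB (bQ q) → False := by
    intro p' q h
    obtain ⟨k, hk1, hk2⟩ := glueLonly _ _ h
    obtain ⟨i, hpi, hki⟩ := notTP' p' k hk1
    rcases sB_cases (Fin.cast hAB k) with ⟨j, h1, h2⟩ | ⟨j, h1, h2⟩
    · simp at h2
      have := j.isLt
      omega
    · exact absurd (hk2.trans h1) (disjB q _)
  have crossP'Q' : ∀ (p' : P'.carrier) (q' : Q'.carrier), lA (aP' p') = lB (bQ' q') →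
      ∃ i : Fin P'.m, p' = P'.t i ∧ q' = Q'.s (Fin.cast hPQ' i) := by
    intro p' q' h
    obtain ⟨k, hk1, hk2⟩ := glueLonly _ _ h
    obtain ⟨i, hpi, hki⟩ := notTP' p' k hk1
    rcases sB_cases (Fin.cast hAB k) with ⟨j, h1, h2⟩ | ⟨j, h1, h2⟩
    · exact absurd (hk2.trans h1).symm (disjB _ q')
    · refine ⟨i, hpi, ?_⟩
      have hq : q' = Q'.s j := bQ'inj (hk2.trans h1)
      have hj : j = Fin.cast hPQ' i := by apply Fin.ext; simp at h2 ⊢; omega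
      rw [hq, hj]
  -- the map on C and C'
  let φ0 : C.carrier → L.carrier := fun x =>
    if h : ∃ p, x = cP p then lA (aP h.choose)
    else lB (bQ ((covC x).resolve_left h).choose)
  let φ0' : C'.carrier → L.carrier := fun x =>
    if h : ∃ p, x = cP' p then lA (aP' h.choose)
    else lB (bQ' ((covC' x).resolve_left h).choose)
  have hφ0P : ∀ p : P.carrier, φ0 (cP p) = lA (aP p) := by
    intro p
    have hex : ∃ p', cP p = cP p' := ⟨p, rfl⟩
    show (if h : ∃ p', cP p = cP p' then lA (aP h.choose)
      else lB (bQ ((covC (cP p)).resolve_left h).choose)) = lA (aP p)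
    rw [dif_pos hex, ← cPinj hex.choose_spec]
  have hφ0Q : ∀ q : Q.carrier, φ0 (cQ q) = lB (bQ q) := by
    intro q
    show (if h : ∃ p', cQ q = cP p' then lA (aP h.choose)
      else lB (bQ ((covC (cQ q)).resolve_left h).choose)) = lB (bQ q)
    by_cases h : ∃ p', cQ q = cP p'
    · rw [dif_pos h]
      obtain ⟨i, hti, hsi⟩ := glueConly h.choose q h.choose_spec.symm
      rw [hti, key1, ← hsi]
    · rw [dif_neg h, ← cQinj ((covC (cQ q)).resolve_left h).choose_spec]
  have hφ0P' : ∀ p : P'.carrier, φ0' (cP' p) = lA (aP' p) := by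
    intro p
    have hex : ∃ p', cP' p = cP' p' := ⟨p, rfl⟩
    show (if h : ∃ p', cP' p = cP' p' then lA (aP' h.choose)
      else lB (bQ' ((covC' (cP' p)).resolve_left h).choose)) = lA (aP' p)
    rw [dif_pos hex, ← cP'inj hex.choose_spec]
  have hφ0Q' : ∀ q : Q'.carrier, φ0' (cQ' q) = lB (bQ' q) := by
    intro q
    show (if h : ∃ p', cQ' q = cP' p' then lA (aP' h.choose)
      else lB (bQ' ((covC' (cQ' q)).resolve_left h).choose)) = lB (bQ' q)
    by_cases h : ∃ p', cQ' q = cP' p'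
    · rw [dif_pos h]
      obtain ⟨i, hti, hsi⟩ := glueC'only h.choose q h.choose_spec.symm
      rw [hti, key1', ← hsi]
    · rw [dif_neg h, ← cQ'inj ((covC' (cQ' q)).resolve_left h).choose_spec]
  -- full map
  let φ : Rt.carrier → L.carrier := fun r =>
    if h : ∃ x, r = rC x then φ0 h.choose
    else φ0' ((covR r).resolve_left h).choose
  have hφC : ∀ x : C.carrier, φ (rC x) = φ0 x := by
    intro x
    have hex : ∃ x', rC x = rC x' := ⟨x, rfl⟩
    show (if h : ∃ x', rC x = rC x' then φ0 h.choose
      else φ0' ((covR (rC x)).resolve_left h).choose) = φ0 x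
    rw [dif_pos hex, ← rCinj hex.choose_spec]
  have hφC' : ∀ x : C'.carrier, φ (rC' x) = φ0' x := by
    intro x
    have hne : ¬ ∃ x', rC' x = rC x' := by
      rintro ⟨x', hx'⟩
      exact disjR x' x hx'.symm
    show (if h : ∃ x', rC' x = rC x' then φ0 h.choose
      else φ0' ((covR (rC' x)).resolve_left h).choose) = φ0' x
    rw [dif_neg hne, ← rC'inj ((covR (rC' x)).resolve_left hne).choose_spec]
  -- injectivity
  have inj0 : ∀ a b : C.carrier, φ0 a = φ0 b → a = b := by
    intro a b h
    rcases covC a with ⟨p1, rfl⟩ | ⟨q1, rfl⟩ <;> rcases covC b with ⟨p2, rfl⟩ | ⟨q2, rfl⟩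
    · rw [hφ0P, hφ0P] at h
      rw [aPinj (lAinj h)]
    · rw [hφ0P, hφ0Q] at h
      obtain ⟨i, hp, hq⟩ := crossPQ _ _ h
      rw [hp, hq, glueC]
    · rw [hφ0Q, hφ0P] at h
      obtain ⟨i, hp, hq⟩ := crossPQ _ _ h.symm
      rw [hp, hq, glueC]
    · rw [hφ0Q, hφ0Q] at h
      rw [bQinj (lBinj h)]
  have inj0' : ∀ a b : C'.carrier, φ0' a = φ0' b → a = b := by
    intro a b h
    rcases covC' a with ⟨p1, rfl⟩ | ⟨q1, rfl⟩ <;> rcases covC' b with ⟨p2, rfl⟩ | ⟨q2, rfl⟩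
    · rw [hφ0P', hφ0P'] at h
      rw [aP'inj (lAinj h)]
    · rw [hφ0P', hφ0Q'] at h
      obtain ⟨i, hp, hq⟩ := crossP'Q' _ _ h
      rw [hp, hq, glueC']
    · rw [hφ0Q', hφ0P'] at h
      obtain ⟨i, hp, hq⟩ := crossP'Q' _ _ h.symm
      rw [hp, hq, glueC']
    · rw [hφ0Q', hφ0Q'] at h
      rw [bQ'inj (lBinj h)]
  have disj0 : ∀ (a : C.carrier) (b : C'.carrier), φ0 a ≠ φ0' b := by
    intro a b h
    rcases covC a with ⟨p1, rfl⟩ | ⟨q1, rfl⟩ <;> rcases covC' b with ⟨p2, rfl⟩ | ⟨q2, rfl⟩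
    · rw [hφ0P, hφ0P'] at h
      exact disjA p1 p2 (lAinj h)
    · rw [hφ0P, hφ0Q'] at h
      exact crossPQ' _ _ h
    · rw [hφ0Q, hφ0P'] at h
      exact crossP'Q _ _ h.symm
    · rw [hφ0Q, hφ0Q'] at h
      exact disjB q1 q2 (lBinj h)
  have hinj : Function.Injective φ := by
    intro r1 r2 h
    rcases covR r1 with ⟨a, rfl⟩ | ⟨a, rfl⟩ <;> rcases covR r2 with ⟨b, rfl⟩ | ⟨b, rfl⟩
    · rw [hφC, hφC] at h
      rw [inj0 _ _ h]
    · rw [hφC, hφC'] at h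
      exact absurd h (disj0 a b)
    · rw [hφC', hφC] at h
      exact absurd h.symm (disj0 b a)
    · rw [hφC', hφC'] at h
      rw [inj0' _ _ h]
  have hsurj : Function.Surjective φ := by
    intro l
    rcases covL l with ⟨a, rfl⟩ | ⟨b, rfl⟩
    · rcases covA a with ⟨p, rfl⟩ | ⟨p, rfl⟩
      · exact ⟨rC (cP p), by rw [hφC, hφ0P]⟩
      · exact ⟨rC' (cP' p), by rw [hφC', hφ0P']⟩
    · rcases covB b with ⟨q, rfl⟩ | ⟨q, rfl⟩
      · exact ⟨rC (cQ q), by rw [hφC, hφ0Q]⟩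
      · exact ⟨rC' (cQ' q), by rw [hφC', hφ0Q']⟩
  -- monotonicity
  have mono0 : ∀ a b : C.carrier, a ≤ b → φ0 a ≤ φ0 b := by
    intro a b hab
    rcases (ordC a b).1 hab with ⟨x, y, rfl, rfl, hxy⟩ | ⟨x, y, rfl, rfl, hxy⟩ |
      ⟨x, y, rfl, rfl, hx, hy⟩
    · rw [hφ0P, hφ0P]
      exact (ordL _ _).2 (Or.inl ⟨aP x, aP y, rfl, rfl,
        (ordA _ _).2 (Or.inl ⟨x, y, rfl, rfl, hxy⟩)⟩)
    · rw [hφ0Q, hφ0Q]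
      exact (ordL _ _).2 (Or.inr (Or.inl ⟨bQ x, bQ y, rfl, rfl,
        (ordB _ _).2 (Or.inl ⟨x, y, rfl, rfl, hxy⟩)⟩))
    · rw [hφ0P, hφ0Q]
      refine (ordL _ _).2 (Or.inr (Or.inr ⟨aP x, bQ y, rfl, rfl, ?_, ?_⟩))
      · rintro ⟨k, hk⟩
        obtain ⟨i, hpi, -⟩ := notTP x k hk.symm
        exact hx ⟨i, hpi.symm⟩
      · rintro ⟨k, hk⟩
        obtain ⟨j, hqj, -⟩ := notSQ y k hk.symm
        exact hy ⟨j, hqj.symm⟩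
  have mono0' : ∀ a b : C'.carrier, a ≤ b → φ0' a ≤ φ0' b := by
    intro a b hab
    rcases (ordC' a b).1 hab with ⟨x, y, rfl, rfl, hxy⟩ | ⟨x, y, rfl, rfl, hxy⟩ |
      ⟨x, y, rfl, rfl, hx, hy⟩
    · rw [hφ0P', hφ0P']
      exact (ordL _ _).2 (Or.inl ⟨aP' x, aP' y, rfl, rfl,
        (ordA _ _).2 (Or.inr ⟨x, y, rfl, rfl, hxy⟩)⟩)
    · rw [hφ0Q', hφ0Q']
      exact (ordL _ _).2 (Or.inr (Or.inl ⟨bQ' x, bQ' y, rfl, rfl,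
        (ordB _ _).2 (Or.inr ⟨x, y, rfl, rfl, hxy⟩)⟩))
    · rw [hφ0P', hφ0Q']
      refine (ordL _ _).2 (Or.inr (Or.inr ⟨aP' x, bQ' y, rfl, rfl, ?_, ?_⟩))
      · rintro ⟨k, hk⟩
        obtain ⟨i, hpi, -⟩ := notTP' x k hk.symm
        exact hx ⟨i, hpi.symm⟩
      · rintro ⟨k, hk⟩
        obtain ⟨j, hqj, -⟩ := notSQ' y k hk.symm
        exact hy ⟨j, hqj.symm⟩
  have hn : Rt.n = L.n := by omega
  have hm : Rt.m = L.m := by omega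
  refine ⟨hn, hm, Equiv.ofBijective φ ⟨hinj, hsurj⟩, ?_, ?_, ?_⟩
  · intro x y hxy
    show φ x ≤ φ y
    rcases (ordR x y).1 hxy with ⟨a, b, rfl, rfl, hab⟩ | ⟨a, b, rfl, rfl, hab⟩
    · rw [hφC, hφC]
      exact mono0 _ _ hab
    · rw [hφC', hφC']
      exact mono0' _ _ hab
  · intro i
    show φ (Rt.s i) = L.s (Fin.cast hn i)
    by_cases hi : (i : ℕ) < C.n
    · have hii : i = Fin.cast hnR (Fin.castAdd C'.n ⟨i, hi⟩) := by apply Fin.ext; simp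
      rw [hii, sR1, hφC, sC, hφ0P, sL]
      have hidx : Fin.cast hnL (Fin.cast hn (Fin.cast hnR (Fin.castAdd C'.n ⟨(i : ℕ), hi⟩)))
          = Fin.cast hnA (Fin.castAdd P'.n (Fin.cast hnC ⟨(i : ℕ), hi⟩)) := by
        apply Fin.ext; simp
      rw [hidx, sA1]
    · have hi2 : (i : ℕ) - C.n < C'.n := by have := i.isLt; omega
      have hii : i = Fin.cast hnR (Fin.natAdd C.n ⟨(i : ℕ) - C.n, hi2⟩) := by
        apply Fin.ext; simp; omega
      rw [hii, sR2, hφC', sC', hφ0P', sL]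
      have hidx : Fin.cast hnL (Fin.cast hn (Fin.cast hnR (Fin.natAdd C.n ⟨(i : ℕ) - C.n, hi2⟩)))
          = Fin.cast hnA (Fin.natAdd P.n (Fin.cast hnC' ⟨(i : ℕ) - C.n, hi2⟩)) := by
        apply Fin.ext; simp; omega
      rw [hidx, sA2]
  · intro i
    show φ (Rt.t i) = L.t (Fin.cast hm i)
    by_cases hi : (i : ℕ) < C.m
    · have hii : i = Fin.cast hmR (Fin.castAdd C'.m ⟨i, hi⟩) := by apply Fin.ext; simp
      rw [hii, tR1, hφC, tC, hφ0Q, tL]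
      have hidx : Fin.cast hmL (Fin.cast hm (Fin.cast hmR (Fin.castAdd C'.m ⟨(i : ℕ), hi⟩)))
          = Fin.cast hmB (Fin.castAdd Q'.m (Fin.cast hmC ⟨(i : ℕ), hi⟩)) := by
        apply Fin.ext; simp
      rw [hidx, tB1]
    · have hi2 : (i : ℕ) - C.m < C'.m := by have := i.isLt; omega
      have hii : i = Fin.cast hmR (Fin.natAdd C.m ⟨(i : ℕ) - C.m, hi2⟩) := by
        apply Fin.ext; simp; omega
      rw [hii, tR2, hφC', tC', hφ0Q', tL]
      have hidx : Fin.cast hmL (Fin.cast hm (Fin.cast hmR (Fin.natAdd C.m ⟨(i : ℕ) - C.m, hi2⟩)))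
          = Fin.cast hmB (Fin.natAdd Q.m (Fin.cast hmC' ⟨(i : ℕ) - C.m, hi2⟩)) := by
        apply Fin.ext; simp; omega
      rw [hidx, tB2]
end

section
/- Equational interchange for singletons: for iposets P : 1 → m and Q : m → 1 (so that the gluings are defined) and k, ℓ ∈ {0,1}, (1_{k,1} ⊗ P) * (1_{1,ℓ} ⊗ Q) = 1_{k,ℓ} ⊗ (P * Q), where 1_{k,ℓ} denotes the singleton iposet on one point with source interface of size k and target interface of size ℓ. -/
/-- `1_{k,ℓ}`: the singleton iposet with source interface of size `k` and
target interface of size `ℓ` (`k, ℓ ∈ {0,1}`). -/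
def IsIdpos (k l : ℕ) (E : Iposet) : Prop :=
  E.n = k ∧ E.m = l ∧ Iposet.IsSingletonIp E

/-- Equational interchange for singletons: for `P : 1 → m`, `Q : m → 1` and
`k, ℓ ∈ {0,1}`, `(1_{k,1} ⊗ P) * (1_{1,ℓ} ⊗ Q) = 1_{k,ℓ} ⊗ (P * Q)`. -/
theorem singleton_interchange (k l : ℕ) (hk : k ≤ 1) (hl : l ≤ 1)
    (P Q E1 E2 E3 A B LHS PQ RHS : Iposet)
    (hPn : P.n = 1) (hQm : Q.m = 1)
    (hE1 : IsIdpos k 1 E1) (hE2 : IsIdpos 1 l E2) (hE3 : IsIdpos k l E3)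
    (hA : Iposet.IsParallel E1 P A) (hB : Iposet.IsParallel E2 Q B)
    (hLHS : Iposet.IsGluing A B LHS)
    (hPQ : Iposet.IsGluing P Q PQ)
    (hRHS : Iposet.IsParallel E3 PQ RHS) :
    Iposet.Iso LHS RHS := by
  classical
  obtain ⟨hk1, hm1, e1, he1⟩ := hE1
  obtain ⟨hn2, hl2, e2, he2⟩ := hE2
  obtain ⟨hk3, hl3, e3, he3⟩ := hE3
  obtain ⟨hAn, hAm, i1, iP, i1inj, iPinj, Acov, Adisj, Ale, As1, AsP, At1, AtP⟩ := hA
  obtain ⟨hBn, hBm, i2, iQ, i2inj, iQinj, Bcov, Bdisj, Ble, Bs1, BsQ, Bt1, BtQ⟩ := hB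
  obtain ⟨hAB, hLn, hLm, jA, jB, jAinj, jBinj, Lcov, Lglue, LglueBack, Lle, Ls, Lt⟩ := hLHS
  obtain ⟨hPQh, hPQn, hPQm, kP, kQ, kPinj, kQinj, PQcov, PQglue, PQglueBack, PQle, PQs, PQt⟩ := hPQ
  obtain ⟨hRn, hRm, j3, jPQ, j3inj, jPQinj, Rcov, Rdisj, Rle, Rs1, RsPQ, Rt1, RtPQ⟩ := hRHS
  -- decomposition lemmas for interface maps of parallel compositions
  have Atdec : ∀ ι : Fin A.m, (∃ e, A.t ι = i1 e ∧ ι.val < E1.m) ∨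
      (∃ i : Fin P.m, A.t ι = iP (P.t i) ∧ ι.val = E1.m + i.val) := by
    intro ι
    have hιlt := ι.isLt
    rcases Nat.lt_or_ge ι.val E1.m with hlt | hge
    · refine Or.inl ⟨E1.t ⟨ι.val, hlt⟩, ?_, hlt⟩
      have hι : ι = Fin.cast hAm (Fin.castAdd P.m ⟨ι.val, hlt⟩) := by
        ext
        simp only [Fin.coe_cast, Fin.coe_castAdd]
      rw [← At1 ⟨ι.val, hlt⟩]
      exact congrArg A.t hι
    · have hi : ι.val - E1.m < P.m := by omega
      have heq : ι.val = E1.m + (ι.val - E1.m) := by omega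
      refine Or.inr ⟨⟨ι.val - E1.m, hi⟩, ?_, heq⟩
      have hι : ι = Fin.cast hAm (Fin.natAdd E1.m ⟨ι.val - E1.m, hi⟩) := by
        ext
        simp only [Fin.coe_cast, Fin.coe_natAdd]
        omega
      rw [← AtP ⟨ι.val - E1.m, hi⟩]
      exact congrArg A.t hι
  have Bsdec : ∀ ι : Fin B.n, (∃ e, B.s ι = i2 e ∧ ι.val < E2.n) ∨
      (∃ j : Fin Q.n, B.s ι = iQ (Q.s j) ∧ ι.val = E2.n + j.val) := by
    intro ι
    have hιlt := ι.isLt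
    rcases Nat.lt_or_ge ι.val E2.n with hlt | hge
    · refine Or.inl ⟨E2.s ⟨ι.val, hlt⟩, ?_, hlt⟩
      have hι : ι = Fin.cast hBn (Fin.castAdd Q.n ⟨ι.val, hlt⟩) := by
        ext
        simp only [Fin.coe_cast, Fin.coe_castAdd]
      rw [← Bs1 ⟨ι.val, hlt⟩]
      exact congrArg B.s hι
    · have hi : ι.val - E2.n < Q.n := by omega
      have heq : ι.val = E2.n + (ι.val - E2.n) := by omega
      refine Or.inr ⟨⟨ι.val - E2.n, hi⟩, ?_, heq⟩
      have hι : ι = Fin.cast hBn (Fin.natAdd E2.n ⟨ι.val - E2.n, hi⟩) := by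
        ext
        simp only [Fin.coe_cast, Fin.coe_natAdd]
        omega
      rw [← BsQ ⟨ι.val - E2.n, hi⟩]
      exact congrArg B.s hι
  have Asdec : ∀ ι : Fin A.n, (∃ e, A.s ι = i1 e ∧ ι.val < E1.n) ∨
      (∃ j : Fin P.n, A.s ι = iP (P.s j) ∧ ι.val = E1.n + j.val) := by
    intro ι
    have hιlt := ι.isLt
    rcases Nat.lt_or_ge ι.val E1.n with hlt | hge
    · refine Or.inl ⟨E1.s ⟨ι.val, hlt⟩, ?_, hlt⟩
      have hι : ι = Fin.cast hAn (Fin.castAdd P.n ⟨ι.val, hlt⟩) := by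
        ext
        simp only [Fin.coe_cast, Fin.coe_castAdd]
      rw [← As1 ⟨ι.val, hlt⟩]
      exact congrArg A.s hι
    · have hi : ι.val - E1.n < P.n := by omega
      have heq : ι.val = E1.n + (ι.val - E1.n) := by omega
      refine Or.inr ⟨⟨ι.val - E1.n, hi⟩, ?_, heq⟩
      have hι : ι = Fin.cast hAn (Fin.natAdd E1.n ⟨ι.val - E1.n, hi⟩) := by
        ext
        simp only [Fin.coe_cast, Fin.coe_natAdd]
        omega
      rw [← AsP ⟨ι.val - E1.n, hi⟩]
      exact congrArg A.s hι
  have Btdec : ∀ ι : Fin B.m, (∃ e, B.t ι = i2 e ∧ ι.val < E2.m) ∨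
      (∃ j : Fin Q.m, B.t ι = iQ (Q.t j) ∧ ι.val = E2.m + j.val) := by
    intro ι
    have hιlt := ι.isLt
    rcases Nat.lt_or_ge ι.val E2.m with hlt | hge
    · refine Or.inl ⟨E2.t ⟨ι.val, hlt⟩, ?_, hlt⟩
      have hι : ι = Fin.cast hBm (Fin.castAdd Q.m ⟨ι.val, hlt⟩) := by
        ext
        simp only [Fin.coe_cast, Fin.coe_castAdd]
      rw [← Bt1 ⟨ι.val, hlt⟩]
      exact congrArg B.t hι
    · have hi : ι.val - E2.m < Q.m := by omega
      have heq : ι.val = E2.m + (ι.val - E2.m) := by omega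
      refine Or.inr ⟨⟨ι.val - E2.m, hi⟩, ?_, heq⟩
      have hι : ι = Fin.cast hBm (Fin.natAdd E2.m ⟨ι.val - E2.m, hi⟩) := by
        ext
        simp only [Fin.coe_cast, Fin.coe_natAdd]
        omega
      rw [← BtQ ⟨ι.val - E2.m, hi⟩]
      exact congrArg B.t hι
  -- range lemmas
  have ι0 : Fin E1.m := ⟨0, by omega⟩
  have ι0' : Fin E2.n := ⟨0, by omega⟩
  have rangePt : ∀ p : P.carrier, p ∈ Set.range P.t → iP p ∈ Set.range A.t := by
    rintro p ⟨i, rfl⟩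
    exact ⟨Fin.cast hAm (Fin.natAdd E1.m i), AtP i⟩
  have rangePt' : ∀ p : P.carrier, iP p ∈ Set.range A.t → p ∈ Set.range P.t := by
    rintro p ⟨ι, hι⟩
    rcases Atdec ι with ⟨e, he, _⟩ | ⟨i, hi, _⟩
    · exact absurd (he.symm.trans hι) (Adisj e p)
    · exact ⟨i, (iPinj (hι.symm.trans hi)).symm⟩
  have rangeQs : ∀ q : Q.carrier, q ∈ Set.range Q.s → iQ q ∈ Set.range B.s := by
    rintro q ⟨j, rfl⟩
    exact ⟨Fin.cast hBn (Fin.natAdd E2.n j), BsQ j⟩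
  have rangeQs' : ∀ q : Q.carrier, iQ q ∈ Set.range B.s → q ∈ Set.range Q.s := by
    rintro q ⟨ι, hι⟩
    rcases Bsdec ι with ⟨e, he, _⟩ | ⟨j, hj, _⟩
    · exact absurd (he.symm.trans hι) (Bdisj e q)
    · exact ⟨j, (iQinj (hι.symm.trans hj)).symm⟩
  have mE1range : i1 e1 ∈ Set.range A.t := by
    refine ⟨Fin.cast hAm (Fin.castAdd P.m ι0), ?_⟩
    rw [At1]
    exact congrArg i1 (he1 _)
  have mE2range : i2 e2 ∈ Set.range B.s := by
    refine ⟨Fin.cast hBn (Fin.castAdd Q.n ι0'), ?_⟩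
    rw [Bs1]
    exact congrArg i2 (he2 _)
  -- merged point facts
  have mergedA : jA (i1 e1) = jB (i2 e2) := by
    have h1 := Lglue (Fin.cast hAm (Fin.castAdd P.m ι0))
    have h2 : A.t (Fin.cast hAm (Fin.castAdd P.m ι0)) = i1 e1 := by
      rw [At1]
      exact congrArg i1 (he1 _)
    have h3 : Fin.cast hAB (Fin.cast hAm (Fin.castAdd P.m ι0)) =
        Fin.cast hBn (Fin.castAdd Q.n ι0') := by
      have h4 := ι0.isLt
      have h5 := ι0'.isLt
      ext
      simp only [Fin.coe_cast, Fin.coe_castAdd]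
      omega
    rw [h2, h3, Bs1] at h1
    rw [h1]
    exact congrArg jB (congrArg i2 (he2 _))
  have mergedP : ∀ i : Fin P.m,
      jA (iP (P.t i)) = jB (iQ (Q.s (Fin.cast hPQh i))) := by
    intro i
    have h1 := Lglue (Fin.cast hAm (Fin.natAdd E1.m i))
    have h3 : Fin.cast hAB (Fin.cast hAm (Fin.natAdd E1.m i)) =
        Fin.cast hBn (Fin.natAdd E2.n (Fin.cast hPQh i)) := by
      ext
      simp only [Fin.coe_cast, Fin.coe_natAdd]
      omega
    rw [AtP, h3, BsQ] at h1
    exact h1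
  -- non-relations for F well-definedness
  have notE1Q : ∀ q : Q.carrier, jA (i1 e1) ≠ jB (iQ q) := by
    intro q h
    obtain ⟨ι, hx, hy⟩ := LglueBack _ _ h
    rcases Atdec ι with ⟨e, he, hlt⟩ | ⟨i, hi, hval⟩
    · rcases Bsdec (Fin.cast hAB ι) with ⟨e', he', _⟩ | ⟨j, hj, hval'⟩
      · exact Bdisj e' q (he'.symm.trans hy.symm)
      · simp only [Fin.coe_cast] at hval'
        omega
    · exact Adisj e1 (P.t i) (hx.trans hi)
  have notE2P : ∀ p : P.carrier, jA (iP p) ≠ jB (i2 e2) := by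
    intro p h
    obtain ⟨ι, hx, hy⟩ := LglueBack _ _ h
    rcases Atdec ι with ⟨e, he, hlt⟩ | ⟨i, hi, hval⟩
    · exact Adisj e p (he.symm.trans hx.symm)
    · rcases Bsdec (Fin.cast hAB ι) with ⟨e', he', hlt'⟩ | ⟨j, hj, hval'⟩
      · simp only [Fin.coe_cast] at hlt'
        omega
      · exact Bdisj e2 (Q.s j) (hy.trans hj)
  -- the forward map
  set F : LHS.carrier → RHS.carrier := fun r =>
    if h : ∃ p, r = jA (iP p) then jPQ (kP h.choose)
    else if h' : ∃ q, r = jB (iQ q) then jPQ (kQ h'.choose)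
    else j3 e3 with hFdef
  have hF1 : F (jA (i1 e1)) = j3 e3 := by
    have h1 : ¬∃ p, jA (i1 e1) = jA (iP p) := by
      rintro ⟨p, hp⟩
      exact Adisj e1 p (jAinj hp)
    have h2 : ¬∃ q, jA (i1 e1) = jB (iQ q) := by
      rintro ⟨q, hq⟩
      exact notE1Q q hq
    simp only [hFdef, dif_neg h1, dif_neg h2]
  have hFP : ∀ p, F (jA (iP p)) = jPQ (kP p) := by
    intro p
    have h1 : ∃ p', jA (iP p) = jA (iP p') := ⟨p, rfl⟩
    simp only [hFdef, dif_pos h1]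
    have hc : h1.choose = p := (iPinj (jAinj h1.choose_spec)).symm
    rw [hc]
  have hFQ : ∀ q, F (jB (iQ q)) = jPQ (kQ q) := by
    intro q
    by_cases h1 : ∃ p, jB (iQ q) = jA (iP p)
    · simp only [hFdef, dif_pos h1]
      obtain ⟨ι, hx, hy⟩ := LglueBack _ _ h1.choose_spec.symm
      rcases Atdec ι with ⟨e, he, hlt⟩ | ⟨i, hi, hval⟩
      · exact absurd (he.symm.trans hx.symm) (Adisj e _)
      · have hp : h1.choose = P.t i := iPinj (hx.trans hi)
        rcases Bsdec (Fin.cast hAB ι) with ⟨e', he', hlt'⟩ | ⟨j, hj, hval'⟩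
        · exact absurd (he'.symm.trans hy.symm) (Bdisj e' q)
        · have hq : q = Q.s j := iQinj (hy.trans hj)
          have hij : Fin.cast hPQh i = j := by
            simp only [Fin.coe_cast] at hval'
            ext
            simp only [Fin.coe_cast]
            omega
          rw [hp, PQglue i, hij, hq]
    · have h2 : ∃ q', jB (iQ q) = jB (iQ q') := ⟨q, rfl⟩
      simp only [hFdef, dif_neg h1, dif_pos h2]
      have hc : h2.choose = q := (iQinj (jBinj h2.choose_spec)).symm
      rw [hc]
  have hF2 : F (jB (i2 e2)) = j3 e3 := by rw [← mergedA, hF1]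
  -- the backward map
  set G : RHS.carrier → LHS.carrier := fun s =>
    if h : ∃ p, s = jPQ (kP p) then jA (iP h.choose)
    else if h' : ∃ q, s = jPQ (kQ q) then jB (iQ h'.choose)
    else jA (i1 e1) with hGdef
  have hG3 : G (j3 e3) = jA (i1 e1) := by
    have h1 : ¬∃ p, j3 e3 = jPQ (kP p) := by
      rintro ⟨p, hp⟩
      exact Rdisj e3 (kP p) hp
    have h2 : ¬∃ q, j3 e3 = jPQ (kQ q) := by
      rintro ⟨q, hq⟩
      exact Rdisj e3 (kQ q) hq
    simp only [hGdef, dif_neg h1, dif_neg h2]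
  have hGP : ∀ p, G (jPQ (kP p)) = jA (iP p) := by
    intro p
    have h1 : ∃ p', jPQ (kP p) = jPQ (kP p') := ⟨p, rfl⟩
    simp only [hGdef, dif_pos h1]
    have hc : h1.choose = p := (kPinj (jPQinj h1.choose_spec)).symm
    rw [hc]
  have hGQ : ∀ q, G (jPQ (kQ q)) = jB (iQ q) := by
    intro q
    by_cases h1 : ∃ p, jPQ (kQ q) = jPQ (kP p)
    · simp only [hGdef, dif_pos h1]
      have hkq : kP h1.choose = kQ q := (jPQinj h1.choose_spec).symm
      obtain ⟨i, hp, hq⟩ := PQglueBack _ _ hkq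
      rw [hp, hq, mergedP i]
    · have h2 : ∃ q', jPQ (kQ q) = jPQ (kQ q') := ⟨q, rfl⟩
      simp only [hGdef, dif_neg h1, dif_pos h2]
      have hc : h2.choose = q := (kQinj (jPQinj h2.choose_spec)).symm
      rw [hc]
  -- cover lemmas
  have Lcases : ∀ r : LHS.carrier,
      r = jA (i1 e1) ∨ (∃ p, r = jA (iP p)) ∨ (∃ q, r = jB (iQ q)) := by
    intro r
    rcases Lcov r with ⟨a, ha⟩ | ⟨b, hb⟩
    · rcases Acov a with ⟨e, hea⟩ | ⟨p, hpa⟩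
      · exact Or.inl (by rw [ha, hea, he1 e])
      · exact Or.inr (Or.inl ⟨p, by rw [ha, hpa]⟩)
    · rcases Bcov b with ⟨e, heb⟩ | ⟨q, hqb⟩
      · refine Or.inl ?_
        rw [hb, heb, he2 e, ← mergedA]
      · exact Or.inr (Or.inr ⟨q, by rw [hb, hqb]⟩)
  have Rcases : ∀ s : RHS.carrier,
      s = j3 e3 ∨ (∃ p, s = jPQ (kP p)) ∨ (∃ q, s = jPQ (kQ q)) := by
    intro s
    rcases Rcov s with ⟨e, he⟩ | ⟨z, hz⟩
    · exact Or.inl (by rw [he, he3 e])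
    · rcases PQcov z with ⟨p, hp⟩ | ⟨q, hq⟩
      · exact Or.inr (Or.inl ⟨p, by rw [hz, hp]⟩)
      · exact Or.inr (Or.inr ⟨q, by rw [hz, hq]⟩)
  -- inverses
  have linv : Function.LeftInverse G F := by
    intro r
    rcases Lcases r with hr | ⟨p, hr⟩ | ⟨q, hr⟩
    · rw [hr, hF1, hG3]
    · rw [hr, hFP, hGP]
    · rw [hr, hFQ, hGQ]
  have rinv : Function.RightInverse G F := by
    intro s
    rcases Rcases s with hs | ⟨p, hs⟩ | ⟨q, hs⟩
    · rw [hs, hG3, hF1]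
    · rw [hs, hGP, hFP]
    · rw [hs, hGQ, hFQ]
  -- order helpers
  have lePQ_RHS : ∀ z z' : PQ.carrier, z ≤ z' → jPQ z ≤ jPQ z' := by
    intro z z' h
    exact (Rle _ _).mpr (Or.inr ⟨z, z', rfl, rfl, h⟩)
  have lePQrev : ∀ z z' : PQ.carrier, jPQ z ≤ jPQ z' → z ≤ z' := by
    intro z z' h
    rcases (Rle _ _).mp h with ⟨x, y, h1, h2, hxy⟩ | ⟨x, y, h1, h2, hxy⟩
    · exact absurd h1.symm (Rdisj x z)
    · rw [jPQinj h1, jPQinj h2]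
      exact hxy
  have noE3PQ : ∀ (e : E3.carrier) (z : PQ.carrier), ¬ j3 e ≤ jPQ z := by
    intro e z h
    rcases (Rle _ _).mp h with ⟨x, y, h1, h2, _⟩ | ⟨x, y, h1, h2, _⟩
    · exact Rdisj y z h2.symm
    · exact Rdisj e x h1
  have noPQE3 : ∀ (z : PQ.carrier) (e : E3.carrier), ¬ jPQ z ≤ j3 e := by
    intro z e h
    rcases (Rle _ _).mp h with ⟨x, y, h1, h2, _⟩ | ⟨x, y, h1, h2, _⟩
    · exact Rdisj x z h1.symm
    · exact Rdisj e y h2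
  have leA_LHS : ∀ a a' : A.carrier, a ≤ a' → jA a ≤ jA a' := by
    intro a a' h
    exact (Lle _ _).mpr (Or.inl ⟨a, a', rfl, rfl, h⟩)
  have leB_LHS : ∀ b b' : B.carrier, b ≤ b' → jB b ≤ jB b' := by
    intro b b' h
    exact (Lle _ _).mpr (Or.inr (Or.inl ⟨b, b', rfl, rfl, h⟩))
  have leP_A : ∀ p p' : P.carrier, p ≤ p' → iP p ≤ iP p' := by
    intro p p' h
    exact (Ale _ _).mpr (Or.inr ⟨p, p', rfl, rfl, h⟩)
  have leQ_B : ∀ q q' : Q.carrier, q ≤ q' → iQ q ≤ iQ q' := by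
    intro q q' h
    exact (Ble _ _).mpr (Or.inr ⟨q, q', rfl, rfl, h⟩)
  have leP_PQ : ∀ p p' : P.carrier, p ≤ p' → kP p ≤ kP p' := by
    intro p p' h
    exact (PQle _ _).mpr (Or.inl ⟨p, p', rfl, rfl, h⟩)
  have leQ_PQ : ∀ q q' : Q.carrier, q ≤ q' → kQ q ≤ kQ q' := by
    intro q q' h
    exact (PQle _ _).mpr (Or.inr (Or.inl ⟨q, q', rfl, rfl, h⟩))
  -- forward order preservation
  have Ford : ∀ u v : LHS.carrier, u ≤ v → F u ≤ F v := by
    intro u v h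
    rcases (Lle u v).mp h with ⟨x, y, hu, hv, hxy⟩ | ⟨x, y, hu, hv, hxy⟩ |
      ⟨x, y, hu, hv, hxt, hys⟩
    · rcases (Ale x y).mp hxy with ⟨e, e', hx, hy, _⟩ | ⟨p, p', hx, hy, hpp⟩
      · have hxy2 : x = y := by rw [hx, hy, he1 e, he1 e']
        rw [hu, hv, hxy2]
      · rw [hu, hv, hx, hy, hFP, hFP]
        exact lePQ_RHS _ _ (leP_PQ _ _ hpp)
    · rcases (Ble x y).mp hxy with ⟨e, e', hx, hy, _⟩ | ⟨q, q', hx, hy, hqq⟩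
      · have hxy2 : x = y := by rw [hx, hy, he2 e, he2 e']
        rw [hu, hv, hxy2]
      · rw [hu, hv, hx, hy, hFQ, hFQ]
        exact lePQ_RHS _ _ (leQ_PQ _ _ hqq)
    · rcases Acov x with ⟨e, hx⟩ | ⟨p, hx⟩
      · rw [hx, he1 e] at hxt
        exact absurd mE1range hxt
      · rcases Bcov y with ⟨e, hy⟩ | ⟨q, hy⟩
        · rw [hy, he2 e] at hys
          exact absurd mE2range hys
        · rw [hu, hv, hx, hy, hFP, hFQ]
          rw [hx] at hxt
          rw [hy] at hys
          refine lePQ_RHS _ _ ((PQle _ _).mpr (Or.inr (Or.inr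
            ⟨p, q, rfl, rfl, ?_, ?_⟩)))
          · exact fun hp => hxt (rangePt p hp)
          · exact fun hq => hys (rangeQs q hq)
  -- backward order preservation
  have Frev : ∀ u v : LHS.carrier, F u ≤ F v → u ≤ v := by
    intro u v h
    rcases Lcases u with hu | ⟨p, hu⟩ | ⟨q, hu⟩ <;>
      rcases Lcases v with hv | ⟨p', hv⟩ | ⟨q', hv⟩ <;> subst hu <;> subst hv
    · exact le_refl _
    · rw [hF1, hFP] at h
      exact absurd h (noE3PQ _ _)
    · rw [hF1, hFQ] at h
      exact absurd h (noE3PQ _ _)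
    · rw [hFP, hF1] at h
      exact absurd h (noPQE3 _ _)
    · rw [hFP, hFP] at h
      rcases (PQle _ _).mp (lePQrev _ _ h) with ⟨x, y, h1, h2, hxy⟩ |
        ⟨x, y, h1, h2, hxy⟩ | ⟨x, y, h1, h2, hx, hy⟩
      · rw [← kPinj h1, ← kPinj h2] at hxy
        exact leA_LHS _ _ (leP_A _ _ hxy)
      · obtain ⟨i, hpi, hxi⟩ := PQglueBack _ _ h1
        obtain ⟨i', hpi', hxi'⟩ := PQglueBack _ _ h2
        have hxy2 : x = y := by
          rcases lt_or_eq_of_le hxy with hlt | heq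
          · rw [hxi'] at hlt
            exact absurd hlt (Q.s_min _ _)
          · exact heq
        have hcast : Q.s (Fin.cast hPQh i) = Q.s (Fin.cast hPQh i') := by
          rw [← hxi, ← hxi', hxy2]
        have hii : i = i' := by
          have h5 := Q.s_inj hcast
          have h6 : (Fin.cast hPQh i).val = (Fin.cast hPQh i').val := by rw [h5]
          simp only [Fin.coe_cast] at h6
          exact Fin.ext h6
        rw [hpi, hpi', hii]
      · obtain ⟨j, _, hj⟩ := PQglueBack _ _ h2
        exact absurd ⟨_, hj.symm⟩ hy
    · rw [hFP, hFQ] at h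
      rcases (PQle _ _).mp (lePQrev _ _ h) with ⟨x, y, h1, h2, hxy⟩ |
        ⟨x, y, h1, h2, hxy⟩ | ⟨x, y, h1, h2, hx, hy⟩
      · obtain ⟨i, hyi, hqi⟩ := PQglueBack _ _ h2.symm
        rw [← kPinj h1] at hxy
        rw [hqi, ← mergedP i, ← hyi]
        exact leA_LHS _ _ (leP_A _ _ hxy)
      · obtain ⟨i, hpi, hxi⟩ := PQglueBack _ _ h1
        rw [← kQinj h2] at hxy
        rw [hpi, mergedP i, ← hxi]
        exact leB_LHS _ _ (leQ_B _ _ hxy)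
      · rw [← kPinj h1] at hx
        rw [← kQinj h2] at hy
        refine (Lle _ _).mpr (Or.inr (Or.inr ⟨iP p, iQ q', rfl, rfl, ?_, ?_⟩))
        · exact fun hr => hx (rangePt' p hr)
        · exact fun hr => hy (rangeQs' q' hr)
    · rw [hFQ, hF1] at h
      exact absurd h (noPQE3 _ _)
    · rw [hFQ, hFP] at h
      rcases (PQle _ _).mp (lePQrev _ _ h) with ⟨x, y, h1, h2, hxy⟩ |
        ⟨x, y, h1, h2, hxy⟩ | ⟨x, y, h1, h2, hx, hy⟩
      · obtain ⟨i, hxi, hqi⟩ := PQglueBack _ _ h1.symm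
        rw [← kPinj h2] at hxy
        rw [hqi, ← mergedP i, ← hxi]
        exact leA_LHS _ _ (leP_A _ _ hxy)
      · obtain ⟨i, hpi, hyi⟩ := PQglueBack _ _ h2
        rw [← kQinj h1] at hxy
        rw [hpi, mergedP i, ← hyi]
        exact leB_LHS _ _ (leQ_B _ _ hxy)
      · obtain ⟨i, hxi, _⟩ := PQglueBack _ _ h1.symm
        exact absurd ⟨i, hxi.symm⟩ hx
    · rw [hFQ, hFQ] at h
      rcases (PQle _ _).mp (lePQrev _ _ h) with ⟨x, y, h1, h2, hxy⟩ |
        ⟨x, y, h1, h2, hxy⟩ | ⟨x, y, h1, h2, hx, hy⟩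
      · obtain ⟨i, hxi, hqi⟩ := PQglueBack _ _ h1.symm
        obtain ⟨i', hyi, hqi'⟩ := PQglueBack _ _ h2.symm
        have hxy2 : x = y := by
          rcases lt_or_eq_of_le hxy with hlt | heq
          · rw [hxi] at hlt
            exact absurd hlt (P.t_max _ _)
          · exact heq
        have hPti : P.t i = P.t i' := by rw [← hxi, ← hyi, hxy2]
        have hii : i = i' := P.t_inj hPti
        rw [hqi, hqi', hii]
      · rw [← kQinj h1, ← kQinj h2] at hxy
        exact leB_LHS _ _ (leQ_B _ _ hxy)
      · obtain ⟨i, hxi, _⟩ := PQglueBack _ _ h1.symm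
        exact absurd ⟨i, hxi.symm⟩ hx
  -- numeric equalities
  have hnLR : LHS.n = RHS.n := by omega
  have hmLR : LHS.m = RHS.m := by omega
  refine ⟨hnLR, hmLR, ⟨F, G, linv, rinv⟩, fun x y => ⟨Ford x y, Frev x y⟩, ?_, ?_⟩
  · -- sources
    intro i
    show F (LHS.s i) = RHS.s (Fin.cast hnLR i)
    rw [Ls i]
    rcases Asdec (Fin.cast hLn i) with ⟨e, he, hlt⟩ | ⟨j, hj, hval⟩
    · rw [he, he1 e, hF1]
      simp only [Fin.coe_cast] at hlt
      have hi3 : i.val < E3.n := by omega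
      have hidx : Fin.cast hnLR i = Fin.cast hRn (Fin.castAdd PQ.n ⟨i.val, hi3⟩) := by
        ext
        simp only [Fin.coe_cast, Fin.coe_castAdd]
      rw [hidx, Rs1]
      exact congrArg j3 (he3 _).symm
    · rw [hj, hFP]
      simp only [Fin.coe_cast] at hval
      have hj'lt : i.val - E1.n < PQ.n := by omega
      set j' : Fin PQ.n := ⟨i.val - E1.n, hj'lt⟩ with hj'def
      have hidx : Fin.cast hnLR i = Fin.cast hRn (Fin.natAdd E3.n j') := by
        ext
        simp only [Fin.coe_cast, Fin.coe_natAdd, hj'def]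
        omega
      rw [hidx, RsPQ, PQs]
      have hjj : Fin.cast hPQn j' = j := by
        ext
        simp only [Fin.coe_cast, hj'def]
        omega
      rw [hjj]
  · -- targets
    intro i
    show F (LHS.t i) = RHS.t (Fin.cast hmLR i)
    rw [Lt i]
    rcases Btdec (Fin.cast hLm i) with ⟨e, he, hlt⟩ | ⟨j, hj, hval⟩
    · rw [he, he2 e, hF2]
      simp only [Fin.coe_cast] at hlt
      have hi3 : i.val < E3.m := by omega
      have hidx : Fin.cast hmLR i = Fin.cast hRm (Fin.castAdd PQ.m ⟨i.val, hi3⟩) := by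
        ext
        simp only [Fin.coe_cast, Fin.coe_castAdd]
      rw [hidx, Rt1]
      exact congrArg j3 (he3 _).symm
    · rw [hj, hFQ]
      simp only [Fin.coe_cast] at hval
      have hj'lt : i.val - E2.m < PQ.m := by omega
      set j' : Fin PQ.m := ⟨i.val - E2.m, hj'lt⟩ with hj'def
      have hidx : Fin.cast hmLR i = Fin.cast hRm (Fin.natAdd E3.m j') := by
        ext
        simp only [Fin.coe_cast, Fin.coe_natAdd, hj'def]
        omega
      rw [hidx, RtPQ, PQt]
      have hjj : Fin.cast hPQm j' = j := by
        ext
        simp only [Fin.coe_cast, hj'def]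
        omega
      rw [hjj]
end

section
/- Decomposition lemma: suppose an iposet P satisfies P = P1 ⊗ P2 = Q1 * Q2 where P1 ≠ id_0 ≠ P2, Q1 is not of the form (f_k, [n], id) : k → n and Q2 is not of the form (id, [n], f_k) : n → k for any k ≤ n (i.e., neither Q1 nor Q2 is a 'generalized identity'). Then at least one of P1, P2 has discrete underlying order (is a parallel composition of singleton iposets). -/
lemma aux_discrete {X Q1 Q2 P : Iposet}
    (ip : Q1.carrier → X.carrier) (iq : Q2.carrier → X.carrier)
    (hord : ∀ u v : X.carrier, u ≤ v ↔
      ((∃ x y : Q1.carrier, u = ip x ∧ v = ip y ∧ x ≤ y) ∨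
       (∃ x y : Q2.carrier, u = iq x ∧ v = iq y ∧ x ≤ y) ∨
       (∃ (x : Q1.carrier) (y : Q2.carrier),
         u = ip x ∧ v = iq y ∧ x ∉ Set.range Q1.t ∧ y ∉ Set.range Q2.s)))
    (j : P.carrier → X.carrier) (hjinj : Function.Injective j)
    (hle : ∀ x y : P.carrier, x ≤ y → j x ≤ j y)
    (hd1 : ∀ c : Q1.carrier, c ∉ Set.range Q1.t → ∀ x : P.carrier, ip c ≠ j x)
    (hd2 : ∀ d : Q2.carrier, d ∉ Set.range Q2.s → ∀ x : P.carrier, iq d ≠ j x) :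
    Iposet.IsDiscrete P := by
  intro x y hxy
  rcases (hord _ _).mp (hle x y hxy) with ⟨u, v, hu, hv, huv⟩ | ⟨u, v, hu, hv, huv⟩ |
    ⟨u, v, hu, hv, hut, hvs⟩
  · by_cases hu' : u ∈ Set.range Q1.t
    · obtain ⟨i, hi⟩ := hu'
      have huv' : u = v := by
        rcases lt_or_eq_of_le huv with hlt | heq
        · exact absurd (hi ▸ hlt) (Q1.t_max i v)
        · exact heq
      exact hjinj (by rw [hu, hv, huv'])
    · exact absurd hu.symm (hd1 u hu' x)
  · by_cases hv' : v ∈ Set.range Q2.s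
    · obtain ⟨i, hi⟩ := hv'
      have huv' : u = v := by
        rcases lt_or_eq_of_le huv with hlt | heq
        · exact absurd (hi ▸ hlt) (Q2.s_min i u)
        · exact heq
      exact hjinj (by rw [hu, hv, huv'])
    · exact absurd hv.symm (hd2 v hv' y)
  · exact absurd hu.symm (hd1 u hut x)

/-- Decomposition lemma: if `P = P1 ⊗ P2 = Q1 * Q2` with `P1, P2` nonempty,
`Q1` not a generalized identity `(f_k, [n], id) : k → n` (i.e. its target
interface is not all of `Q1`) and `Q2` not a generalized identity
`(id, [n], f_k) : n → k` (i.e. its source interface is not all of `Q2`),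
then `P1` or `P2` has discrete underlying order. -/
theorem decomposition_lemma (X P1 P2 Q1 Q2 : Iposet)
    (hpar : Iposet.IsParallel P1 P2 X) (hglue : Iposet.IsGluing Q1 Q2 X)
    (hP1 : ¬ Iposet.IsEmptyIp P1) (hP2 : ¬ Iposet.IsEmptyIp P2)
    (hQ1 : ¬ Function.Surjective Q1.t) (hQ2 : ¬ Function.Surjective Q2.s) :
    Iposet.IsDiscrete P1 ∨ Iposet.IsDiscrete P2 := by
  obtain ⟨hn, hm, jp, jq, hjp, hjq, hcovP, hdisjP, hordP, _⟩ := hpar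
  obtain ⟨h, hgn, hgm, ip, iq, hip, hiq, hcovG, hident, hidinv, hordG, _⟩ := hglue
  obtain ⟨a, ha⟩ : ∃ a : Q1.carrier, a ∉ Set.range Q1.t := by
    by_contra hc
    push_neg at hc
    exact hQ1 fun c => (hc c)
  obtain ⟨b, hb⟩ : ∃ b : Q2.carrier, b ∉ Set.range Q2.s := by
    by_contra hc
    push_neg at hc
    exact hQ2 fun c => (hc c)
  have hab : ip a ≤ iq b := (hordG _ _).mpr (Or.inr (Or.inr ⟨a, b, rfl, rfl, ha, hb⟩))
  have sameComp : ∀ u v : X.carrier, u ≤ v → ((∃ z, u = jp z) ↔ (∃ z, v = jp z)) := by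
    intro u v huv
    rcases (hordP u v).mp huv with ⟨x, y, hu, hv, _⟩ | ⟨x, y, hu, hv, _⟩
    · exact ⟨fun _ => ⟨y, hv⟩, fun _ => ⟨x, hu⟩⟩
    · constructor <;> rintro ⟨z, hz⟩
      · exact absurd (hz.symm.trans hu) (hdisjP z x)
      · exact absurd (hz.symm.trans hv) (hdisjP z y)
  have haP : ∀ c : Q1.carrier, c ∉ Set.range Q1.t →
      ((∃ z, ip c = jp z) ↔ (∃ z, iq b = jp z)) := fun c hc =>
    sameComp _ _ ((hordG _ _).mpr (Or.inr (Or.inr ⟨c, b, rfl, rfl, hc, hb⟩)))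
  have hbP : ∀ d : Q2.carrier, d ∉ Set.range Q2.s →
      ((∃ z, ip a = jp z) ↔ (∃ z, iq d = jp z)) := fun d hd =>
    sameComp _ _ ((hordG _ _).mpr (Or.inr (Or.inr ⟨a, d, rfl, rfl, ha, hd⟩)))
  have habP : (∃ z, ip a = jp z) ↔ (∃ z, iq b = jp z) := sameComp _ _ hab
  rcases hcovP (iq b) with ⟨w, hw⟩ | ⟨w, hw⟩
  · -- iq b is in the P1 component; P2 is discrete
    right
    refine aux_discrete ip iq hordG jq hjq
      (fun x y hxy => (hordP _ _).mpr (Or.inr ⟨x, y, rfl, rfl, hxy⟩)) ?_ ?_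
    · intro c hc x hcx
      obtain ⟨z, hz⟩ := (haP c hc).mpr ⟨w, hw⟩
      exact hdisjP z x (hz.symm.trans hcx)
    · intro d hd x hdx
      obtain ⟨z, hz⟩ := (hbP d hd).mp (habP.mpr ⟨w, hw⟩)
      exact hdisjP z x (hz.symm.trans hdx)
  · -- iq b is in the P2 component; P1 is discrete
    left
    refine aux_discrete ip iq hordG jp hjp
      (fun x y hxy => (hordP _ _).mpr (Or.inl ⟨x, y, rfl, rfl, hxy⟩)) ?_ ?_
    · intro c hc x hcx
      have : ∃ z, iq b = jp z := (haP c hc).mp ⟨x, hcx⟩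
      obtain ⟨z, hz⟩ := this
      exact hdisjP z w (hz.symm.trans hw)
    · intro d hd x hdx
      have : ∃ z, iq b = jp z := habP.mp ((hbP d hd).mpr ⟨x, hdx⟩)
      obtain ⟨z, hz⟩ := this
      exact hdisjP z w (hz.symm.trans hw)
end

section
/- If P has a gluing decomposition P = Q1 * Q2 into two iposets and Q1, Q2 both avoid an induced 2+2 subposet, then P avoids an induced 2+2 subposet; equivalently, every element of C_2 (a gluing of parallel compositions of singleton iposets) is an interval order. -/
/-- `ParCl C` is the closure of `C` under finite parallel compositions
(including the empty one). -/
inductive ParCl (C : Iposet → Prop) : Iposet → Prop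
  | of {P : Iposet} : C P → ParCl C P
  | empty {P : Iposet} : Iposet.IsEmptyIp P → ParCl C P
  | par {P Q R : Iposet} : ParCl C P → ParCl C Q → Iposet.IsParallel P Q R → ParCl C R

/-- `GlueCl C` is the closure of `C` under finite (nonempty) gluing compositions. -/
inductive GlueCl (C : Iposet → Prop) : Iposet → Prop
  | of {P : Iposet} : C P → GlueCl C P
  | glue {P Q R : Iposet} : GlueCl C P → GlueCl C Q → Iposet.IsGluing P Q R → GlueCl C R

/-- The hierarchy `C_0 = S`, `C_{2n+1} = C_{2n}^⊗`, `C_{2n+2} = C_{2n+1}^*`. -/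
def Cc : ℕ → Iposet → Prop
  | 0 => Iposet.IsSingletonIp
  | (k+1) => if k % 2 = 0 then ParCl (Cc k) else GlueCl (Cc k)

/-- The dual hierarchy `D_0 = S`, `D_{2n+1} = D_{2n}^*`, `D_{2n+2} = D_{2n+1}^⊗`. -/
def Dc : ℕ → Iposet → Prop
  | 0 => Iposet.IsSingletonIp
  | (k+1) => if k % 2 = 0 then GlueCl (Dc k) else ParCl (Dc k)

/-- The underlying poset contains an induced 2+2: elements `a,b,c,d` with
`a < b`, `c < d` and no other strict relations. -/
def Has22 (P : Iposet) : Prop :=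
  ∃ a b c d : P.carrier,
    a < b ∧ c < d ∧
    ¬ a ≤ c ∧ ¬ c ≤ a ∧ ¬ a ≤ d ∧ ¬ d ≤ a ∧
    ¬ b ≤ c ∧ ¬ c ≤ b ∧ ¬ b ≤ d ∧ ¬ d ≤ b

lemma discrete_no22 {P : Iposet} (h : P.IsDiscrete) : ¬ Has22 P := by
  rintro ⟨a, b, c, d, hab, -⟩
  exact hab.ne (h a b hab.le)

lemma parcl_discrete {P : Iposet} (h : ParCl Iposet.IsSingletonIp P) : P.IsDiscrete := by
  induction h with
  | of h =>
    rintro x y -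
    obtain ⟨z, hz⟩ := h
    rw [hz x, hz y]
  | empty h => intro x; exact (h.1.false x).elim
  | par hP hQ hpar ihP ihQ =>
    obtain ⟨hn, hm, ip, iq, hipinj, hiqinj, hcov, hdisj, hord, -⟩ := hpar
    intro u v huv
    rcases (hord u v).1 huv with ⟨x, y, hu, hv, hxy⟩ | ⟨x, y, hu, hv, hxy⟩
    · rw [hu, hv, ihP x y hxy]
    · rw [hu, hv, ihQ x y hxy]

lemma glue_no22 (Q1 Q2 P : Iposet) (hg : Iposet.IsGluing Q1 Q2 P)
    (h1 : ¬ Has22 Q1) (h2 : ¬ Has22 Q2) : ¬ Has22 P := by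
  obtain ⟨h, hn, hm, ip, iq, hipinj, hiqinj, hcov, -, -, hord, -, -⟩ := hg
  have ipmono : ∀ x y : Q1.carrier, x ≤ y → ip x ≤ ip y := fun x y hxy =>
    (hord _ _).2 (Or.inl ⟨x, y, rfl, rfl, hxy⟩)
  have iqmono : ∀ x y : Q2.carrier, x ≤ y → iq x ≤ iq y := fun x y hxy =>
    (hord _ _).2 (Or.inr (Or.inl ⟨x, y, rfl, rfl, hxy⟩))
  have cross : ∀ (x : Q1.carrier) (y : Q2.carrier), x ∉ Set.range Q1.t →
      y ∉ Set.range Q2.s → ip x ≤ iq y := fun x y hx hy =>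
    (hord _ _).2 (Or.inr (Or.inr ⟨x, y, rfl, rfl, hx, hy⟩))
  have notT : ∀ x y : Q1.carrier, x < y → x ∉ Set.range Q1.t := by
    rintro x y hxy ⟨i, hi⟩
    exact Q1.t_max i y (hi ▸ hxy)
  have notS : ∀ x y : Q2.carrier, x < y → y ∉ Set.range Q2.s := by
    rintro x y hxy ⟨i, hi⟩
    exact Q2.s_min i x (hi ▸ hxy)
  have decomp : ∀ u v : P.carrier, u < v →
      (∃ x y : Q1.carrier, u = ip x ∧ v = ip y ∧ x < y) ∨
      (∃ x y : Q2.carrier, u = iq x ∧ v = iq y ∧ x < y) ∨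
      (∃ (x : Q1.carrier) (y : Q2.carrier), u = ip x ∧ v = iq y ∧
        x ∉ Set.range Q1.t ∧ y ∉ Set.range Q2.s) := by
    intro u v huv
    rcases (hord u v).1 huv.le with ⟨x, y, hu, hv, hxy⟩ | ⟨x, y, hu, hv, hxy⟩ | h3
    · exact Or.inl ⟨x, y, hu, hv, lt_of_le_of_ne hxy (fun e => huv.ne (by rw [hu, hv, e]))⟩
    · exact Or.inr (Or.inl ⟨x, y, hu, hv,
        lt_of_le_of_ne hxy (fun e => huv.ne (by rw [hu, hv, e]))⟩)
    · exact Or.inr (Or.inr h3)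
  rintro ⟨a, b, c, d, hab, hcd, hac, hca, had, hda, hbc, hcb, hbd, hdb⟩
  rcases decomp a b hab with ⟨xa, xb, ha, hb, hxab⟩ | ⟨ya, yb, ha, hb, hyab⟩ |
      ⟨xa, yb, ha, hb, hxa, hyb⟩ <;>
    rcases decomp c d hcd with ⟨xc, xd, hc, hd, hxcd⟩ | ⟨yc, yd, hc, hd, hycd⟩ |
        ⟨xc, yd, hc, hd, hxc, hyd⟩ <;>
      subst ha <;> subst hb <;> subst hc <;> subst hd
  · exact h1 ⟨xa, xb, xc, xd, hxab, hxcd,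
      fun h' => hac (ipmono _ _ h'), fun h' => hca (ipmono _ _ h'),
      fun h' => had (ipmono _ _ h'), fun h' => hda (ipmono _ _ h'),
      fun h' => hbc (ipmono _ _ h'), fun h' => hcb (ipmono _ _ h'),
      fun h' => hbd (ipmono _ _ h'), fun h' => hdb (ipmono _ _ h')⟩
  · exact had (cross xa yd (notT _ _ hxab) (notS _ _ hycd))
  · exact had (cross xa yd (notT _ _ hxab) hyd)
  · exact hcb (cross xc yb (notT _ _ hxcd) (notS _ _ hyab))
  · exact h2 ⟨ya, yb, yc, yd, hyab, hycd,
      fun h' => hac (iqmono _ _ h'), fun h' => hca (iqmono _ _ h'),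
      fun h' => had (iqmono _ _ h'), fun h' => hda (iqmono _ _ h'),
      fun h' => hbc (iqmono _ _ h'), fun h' => hcb (iqmono _ _ h'),
      fun h' => hbd (iqmono _ _ h'), fun h' => hdb (iqmono _ _ h')⟩
  · exact hcb (cross xc yb hxc (notS _ _ hyab))
  · exact hcb (cross xc yb (notT _ _ hxcd) hyb)
  · exact had (cross xa yd hxa (notS _ _ hycd))
  · exact had (cross xa yd hxa hyd)

/-- If `P = Q1 * Q2` and `Q1`, `Q2` avoid induced 2+2 subposets, then so does
`P`; equivalently, every element of `C_2` (a gluing of parallel compositions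
of singleton iposets) is an interval order (avoids an induced 2+2). -/
theorem gluing_avoids_two_plus_two :
    (∀ Q1 Q2 P : Iposet, Iposet.IsGluing Q1 Q2 P →
      ¬ Has22 Q1 → ¬ Has22 Q2 → ¬ Has22 P) ∧
    (∀ P : Iposet, GlueCl (ParCl Iposet.IsSingletonIp) P → ¬ Has22 P) := by
  refine ⟨glue_no22, ?_⟩
  intro P hP
  induction hP with
  | of h => exact discrete_no22 (parcl_discrete h)
  | glue hP hQ hg ihP ihQ => exact glue_no22 _ _ _ hg ihP ihQ
end
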